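/- arXiv:1707.05058 — 5 statements merged into one kernel-verified Lean document; each statement's English description precedes it below -/
import Mathlib

section
/- For any undirected graph G(V,E) (not necessarily chordal), the cones S^n_+(E,?) and S^n_+(E,0) are dual to each other with respect to the trace inner product in the space S^n(E,0); that is, S^n_+(E,?) = {X ∈ S^n(E,0) : ⟨X,Z⟩ ≥ 0 for all Z ∈ S^n_+(E,0)} and S^n_+(E,0) = {Z ∈ S^n(E,0) : ⟨Z,X⟩ ≥ 0 for all X ∈ S^n_+(E,?)}. -/
open Matrix BigOperators

/-- The edge set augmented with all self-loops: `E* = E ∪ {(i,i) : i ∈ V}`. -/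
def EStar {n : ℕ} (E : Set (Fin n × Fin n)) : Set (Fin n × Fin n) :=
  E ∪ {q | q.1 = q.2}

/-- The edge set of an undirected graph is symmetric. -/
def SymmEdges {n : ℕ} (E : Set (Fin n × Fin n)) : Prop :=
  ∀ i j : Fin n, (i, j) ∈ E → (j, i) ∈ E

/-- `S^n(E,0)`: real symmetric `n × n` matrices vanishing outside `E*`. -/
def SparseSym {n : ℕ} (E : Set (Fin n × Fin n)) (X : Matrix (Fin n) (Fin n) ℝ) : Prop :=
  X.IsSymm ∧ ∀ i j : Fin n, (i, j) ∉ EStar E → X i j = 0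

/-- `S^n_+(E,?)`: matrices in `S^n(E,0)` admitting a positive semidefinite completion. -/
def PSDCompletable {n : ℕ} (E : Set (Fin n × Fin n)) (X : Matrix (Fin n) (Fin n) ℝ) : Prop :=
  SparseSym E X ∧ ∃ M : Matrix (Fin n) (Fin n) ℝ, M.PosSemidef ∧
    ∀ i j : Fin n, (i, j) ∈ EStar E → M i j = X i j

/-- `S^n_+(E,0)`: positive semidefinite matrices with sparsity pattern `E`. -/
def SparsePSD {n : ℕ} (E : Set (Fin n × Fin n)) (X : Matrix (Fin n) (Fin n) ℝ) : Prop :=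
  SparseSym E X ∧ X.PosSemidef

/-- The selector matrix `E_C ∈ R^{|C| × n}` of a subset `C ⊆ {1,…,n}`:
`(E_C)_{ij} = 1` if the `i`-th smallest element of `C` equals `j`, and `0` otherwise. -/
def selector {n : ℕ} (C : Finset (Fin n)) : Matrix (Fin C.card) (Fin n) ℝ :=
  Matrix.of fun i j => if (C.orderIsoOfFin rfl i).1 = j then 1 else 0

/-- A clique: a subset of vertices inducing a complete subgraph. -/
def IsClique {n : ℕ} (E : Set (Fin n × Fin n)) (C : Finset (Fin n)) : Prop :=
  ∀ i ∈ C, ∀ j ∈ C, i ≠ j → (i, j) ∈ E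

/-- A maximal clique: a clique not contained in any other clique. -/
def IsMaximalClique {n : ℕ} (E : Set (Fin n × Fin n)) (C : Finset (Fin n)) : Prop :=
  IsClique E C ∧ ∀ D : Finset (Fin n), IsClique E D → C ⊆ D → D = C

/-- A cycle of length `k+1`: pairwise distinct vertices consecutively adjacent (cyclically). -/
def IsCycle {n : ℕ} (E : Set (Fin n × Fin n)) {k : ℕ} (v : Fin (k + 1) → Fin n) : Prop :=
  Function.Injective v ∧ ∀ i : Fin (k + 1), (v i, v (i + 1)) ∈ E

/-- A chord: an edge joining two non-consecutive vertices of the cycle. -/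
def HasChord {n : ℕ} (E : Set (Fin n × Fin n)) {k : ℕ} (v : Fin (k + 1) → Fin n) : Prop :=
  ∃ i j : Fin (k + 1), i ≠ j ∧ j ≠ i + 1 ∧ i ≠ j + 1 ∧ (v i, v j) ∈ E

/-- A graph is chordal if every cycle of length at least four has a chord. -/
def IsChordal {n : ℕ} (E : Set (Fin n × Fin n)) : Prop :=
  ∀ k : ℕ, 4 ≤ k + 1 → ∀ v : Fin (k + 1) → Fin n, IsCycle E v → HasChord E v

/-! ### Auxiliary material for the duality theorem -/

noncomputable section SparseDualAux

open scoped InnerProductSpace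

variable {n : ℕ}

/-- Euclidean space indexed by matrix entries. -/
abbrev Hn (n : ℕ) := EuclideanSpace ℝ (Fin n × Fin n)

open Classical in
/-- Entrywise projection onto the sparsity pattern `E*`. -/
def projE (E : Set (Fin n × Fin n)) (M : Matrix (Fin n) (Fin n) ℝ) : Matrix (Fin n) (Fin n) ℝ :=
  Matrix.of fun i j => if (i, j) ∈ EStar E then M i j else 0

/-- The canonical identification of matrices with Euclidean space. -/
def toH (M : Matrix (Fin n) (Fin n) ℝ) : Hn n := (WithLp.equiv 2 _).symm fun p => M p.1 p.2

lemma toH_apply (M : Matrix (Fin n) (Fin n) ℝ) (p : Fin n × Fin n) : toH M p = M p.1 p.2 := rfl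

lemma toH_inj {A B : Matrix (Fin n) (Fin n) ℝ} (h : toH A = toH B) : A = B := by
  ext i j; exact congrFun ((WithLp.ext_iff _).1 h) (i, j)

lemma inner_toH (A B : Matrix (Fin n) (Fin n) ℝ) :
    ⟪toH A, toH B⟫_ℝ = ∑ p : Fin n × Fin n, A p.1 p.2 * B p.1 p.2 := by
  simp [toH, PiLp.inner_apply, RCLike.inner_apply, starRingEnd_apply]
  exact Finset.sum_congr rfl fun _ _ => mul_comm _ _

lemma inner_toH' (x : Hn n) (B : Matrix (Fin n) (Fin n) ℝ) :
    ⟪x, toH B⟫_ℝ = ∑ p : Fin n × Fin n, x p * B p.1 p.2 := by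
  simp [toH, PiLp.inner_apply, RCLike.inner_apply, starRingEnd_apply]
  exact Finset.sum_congr rfl fun _ _ => mul_comm _ _

lemma inner_toH_left (A : Matrix (Fin n) (Fin n) ℝ) (x : Hn n) :
    ⟪toH A, x⟫_ℝ = ∑ p : Fin n × Fin n, A p.1 p.2 * x p := by
  simp [toH, PiLp.inner_apply, RCLike.inner_apply, starRingEnd_apply]
  exact Finset.sum_congr rfl fun _ _ => mul_comm _ _

lemma trace_mul_eq (A B : Matrix (Fin n) (Fin n) ℝ) :
    (A * B).trace = ∑ p : Fin n × Fin n, A p.1 p.2 * B p.2 p.1 := by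
  simp [Matrix.trace, Matrix.diag, Matrix.mul_apply, Fintype.sum_prod_type]

lemma dot_eq_quad (M : Matrix (Fin n) (Fin n) ℝ) (v : Fin n → ℝ) :
    star v ⬝ᵥ M *ᵥ v = ∑ p : Fin n × Fin n, v p.1 * M p.1 p.2 * v p.2 := by
  simp [dotProduct, mulVec, Fintype.sum_prod_type, Finset.mul_sum, mul_assoc]

lemma isSymm_of_psd {M : Matrix (Fin n) (Fin n) ℝ} (hM : M.PosSemidef) : M.IsSymm := by
  ext i j
  simpa using congrFun (congrFun hM.1 i) j

lemma symm_apply {M : Matrix (Fin n) (Fin n) ℝ} (h : M.IsSymm) (i j : Fin n) : M i j = M j i := by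
  simpa using congrFun (congrFun h j) i

lemma posSemidef_of_quad {M : Matrix (Fin n) (Fin n) ℝ} (hsym : M.IsSymm)
    (h : ∀ v : Fin n → ℝ, 0 ≤ ∑ p : Fin n × Fin n, v p.1 * M p.1 p.2 * v p.2) :
    M.PosSemidef := by
  refine .of_dotProduct_mulVec_nonneg ?_ fun x => ?_
  · ext i j
    simpa using congrFun (congrFun hsym i) j
  · rw [dot_eq_quad]
    exact h x

lemma quad_expand {M : Matrix (Fin n) (Fin n) ℝ} (hM : M.PosSemidef) (i j : Fin n) (a b : ℝ) :
    0 ≤ a * M i i * a + a * M i j * b + (b * M j i * a + b * M j j * b) := by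
  have h := hM.dotProduct_mulVec_nonneg (Pi.single i a + Pi.single j b)
  simp only [star_trivial, mulVec_add, mulVec_single, dotProduct_add, add_dotProduct,
    single_dotProduct, Pi.smul_apply, op_smul_eq_mul, Matrix.col_apply] at h
  nlinarith [h]

lemma psd_diag_nonneg {M : Matrix (Fin n) (Fin n) ℝ} (hM : M.PosSemidef) (i : Fin n) :
    0 ≤ M i i := by
  have := quad_expand hM i i 1 0
  simpa using this

lemma psd_trace_nonneg {M : Matrix (Fin n) (Fin n) ℝ} (hM : M.PosSemidef) : 0 ≤ M.trace :=
  Finset.sum_nonneg fun i _ => psd_diag_nonneg hM i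

lemma psd_diag_le_trace {M : Matrix (Fin n) (Fin n) ℝ} (hM : M.PosSemidef) (i : Fin n) :
    M i i ≤ M.trace :=
  Finset.single_le_sum (fun j _ => psd_diag_nonneg hM j) (Finset.mem_univ i)

lemma psd_abs_entry_le_trace {M : Matrix (Fin n) (Fin n) ℝ} (hM : M.PosSemidef) (i j : Fin n) :
    |M i j| ≤ M.trace := by
  have h1 := quad_expand hM i j 1 1
  have h2 := quad_expand hM i j 1 (-1)
  have hs : M j i = M i j := symm_apply (isSymm_of_psd hM) j i
  have hi := psd_diag_le_trace hM i
  have hj := psd_diag_le_trace hM j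
  have h0i := psd_diag_nonneg hM i
  have h0j := psd_diag_nonneg hM j
  rw [abs_le]
  constructor <;> nlinarith

lemma psd_smul {c : ℝ} (hc : 0 ≤ c) {M : Matrix (Fin n) (Fin n) ℝ} (hM : M.PosSemidef) :
    (c • M).PosSemidef := by
  refine .of_dotProduct_mulVec_nonneg ?_ fun x => ?_
  · show (c • M)ᴴ = c • M
    rw [conjTranspose_smul, star_trivial, hM.1.eq]
  · have := hM.dotProduct_mulVec_nonneg x
    rw [smul_mulVec, dotProduct_smul]
    positivity

lemma psd_trace_mul_nonneg {A B : Matrix (Fin n) (Fin n) ℝ} (hA : A.PosSemidef)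
    (hB : B.PosSemidef) : 0 ≤ (A * B).trace := by
  open scoped MatrixOrder in
  obtain ⟨C, rfl⟩ := CStarAlgebra.nonneg_iff_eq_star_mul_self.mp hB.nonneg
  have h2 : (A * (star C * C)).trace = (C * A * star C).trace := by
    rw [← mul_assoc, trace_mul_comm, ← mul_assoc]
  rw [h2]
  exact psd_trace_nonneg (hA.mul_mul_conjTranspose_same C)

/-- The rank-one matrix `v vᵀ`. -/
def outer (v : Fin n → ℝ) : Matrix (Fin n) (Fin n) ℝ := Matrix.of fun i j => v i * v j

lemma outer_psd (v : Fin n → ℝ) : (outer v).PosSemidef := by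
  have h : outer v = (Matrix.of (fun (_ : Fin 1) j => v j) : Matrix (Fin 1) (Fin n) ℝ)ᴴ *
      Matrix.of (fun (_ : Fin 1) j => v j) := by
    ext i j
    simp [outer, Matrix.mul_apply, Matrix.conjTranspose_apply]
  rw [h]
  exact posSemidef_conjTranspose_mul_self _

lemma mem_estar_diag (E : Set (Fin n × Fin n)) (i : Fin n) : (i, i) ∈ EStar E := Or.inr rfl

lemma estar_symm {E : Set (Fin n × Fin n)} (hE : SymmEdges E) {i j : Fin n}
    (h : (i, j) ∈ EStar E) : (j, i) ∈ EStar E := by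
  rcases h with h | h
  · exact Or.inl (hE i j h)
  · exact Or.inr (by simpa using h.symm)

open Classical in
lemma projE_apply (E : Set (Fin n × Fin n)) (M : Matrix (Fin n) (Fin n) ℝ) (i j : Fin n) :
    projE E M i j = if (i, j) ∈ EStar E then M i j else 0 := rfl

lemma projE_add (E : Set (Fin n × Fin n)) (A B : Matrix (Fin n) (Fin n) ℝ) :
    projE E (A + B) = projE E A + projE E B := by
  ext i j
  simp only [projE_apply, Matrix.add_apply]
  split <;> simp

lemma projE_smul (E : Set (Fin n × Fin n)) (c : ℝ) (A : Matrix (Fin n) (Fin n) ℝ) :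
    projE E (c • A) = c • projE E A := by
  ext i j
  simp only [projE_apply, Matrix.smul_apply, smul_eq_mul]
  split <;> simp

lemma projE_zero (E : Set (Fin n × Fin n)) : projE E (0 : Matrix (Fin n) (Fin n) ℝ) = 0 := by
  ext i j
  simp [projE_apply]

lemma sparse_trace_congr {E : Set (Fin n × Fin n)} (hE : SymmEdges E)
    {Z A B : Matrix (Fin n) (Fin n) ℝ} (hZ : ∀ i j : Fin n, (i, j) ∉ EStar E → Z i j = 0)
    (h : ∀ i j : Fin n, (i, j) ∈ EStar E → A i j = B i j) :
    (Z * A).trace = (Z * B).trace := by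
  rw [trace_mul_eq, trace_mul_eq]
  refine Finset.sum_congr rfl fun p _ => ?_
  by_cases hp : (p.1, p.2) ∈ EStar E
  · rw [h p.2 p.1 (estar_symm hE hp)]
  · rw [hZ p.1 p.2 hp, zero_mul, zero_mul]

lemma completable_iff {E : Set (Fin n × Fin n)} (hE : SymmEdges E)
    (X : Matrix (Fin n) (Fin n) ℝ) :
    PSDCompletable E X ↔ ∃ M : Matrix (Fin n) (Fin n) ℝ, M.PosSemidef ∧ X = projE E M := by
  constructor
  · rintro ⟨⟨-, hz⟩, M, hM, hac⟩
    refine ⟨M, hM, ?_⟩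
    ext i j
    rw [projE_apply]
    split
    · next hin => exact (hac i j hin).symm
    · next hout => exact hz i j hout
  · rintro ⟨M, hM, rfl⟩
    have hMs := isSymm_of_psd hM
    refine ⟨⟨?_, fun i j hij => by rw [projE_apply, if_neg hij]⟩, M, hM,
      fun i j hij => by rw [projE_apply, if_pos hij]⟩
    ext i j
    rw [Matrix.transpose_apply, projE_apply, projE_apply]
    by_cases hij : (i, j) ∈ EStar E
    · rw [if_pos hij, if_pos (estar_symm hE hij), symm_apply hMs j i]
    · rw [if_neg hij, if_neg fun h => hij (estar_symm hE h)]

/-- The image in `Hn n` of the PSD cone under the sparsity projection, as a convex cone. -/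
def Kc (E : Set (Fin n × Fin n)) : ConvexCone ℝ (Hn n) where
  carrier := {x | ∃ M : Matrix (Fin n) (Fin n) ℝ, M.PosSemidef ∧ x = toH (projE E M)}
  smul_mem' := by
    rintro c hc x ⟨M, hM, rfl⟩
    refine ⟨c • M, psd_smul hc.le hM, ?_⟩
    rw [projE_smul]
    rfl
  add_mem' := by
    rintro x ⟨M, hM, rfl⟩ y ⟨N, hN, rfl⟩
    refine ⟨M + N, hM.add hN, ?_⟩
    rw [projE_add]
    rfl

lemma Kc_nonempty (E : Set (Fin n × Fin n)) : ((Kc E : Set (Hn n))).Nonempty :=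
  ⟨toH (projE E 0), ⟨0, Matrix.PosSemidef.zero, rfl⟩⟩

lemma isClosed_Kc (E : Set (Fin n × Fin n)) : IsClosed ((Kc E : Set (Hn n))) := by
  classical
  refine IsSeqClosed.isClosed ?_
  intro x y hx hxy
  choose M hM hxM using hx
  have hcoord : ∀ p : Fin n × Fin n,
      Filter.Tendsto (fun k => x k p) Filter.atTop (nhds (y p)) := by
    intro p
    have := ((EuclideanSpace.proj p : Hn n →L[ℝ] ℝ).continuous.tendsto y).comp hxy
    simpa [Function.comp_def] using this
  have hxk : ∀ k (p : Fin n × Fin n),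
      x k p = if (p.1, p.2) ∈ EStar E then M k p.1 p.2 else 0 := by
    intro k p
    rw [hxM k]
    rfl
  set t : ℕ → ℝ := fun k => (M k).trace with ht
  have htt : Filter.Tendsto t Filter.atTop (nhds (∑ i : Fin n, y (i, i))) := by
    have he : ∀ k, t k = ∑ i : Fin n, x k (i, i) := by
      intro k
      refine Finset.sum_congr rfl fun i _ => ?_
      rw [hxk k (i, i), if_pos (mem_estar_diag E i)]
      rfl
    rw [show t = fun k => ∑ i : Fin n, x k (i, i) from funext he]
    exact tendsto_finset_sum _ fun i _ => hcoord (i, i)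
  obtain ⟨B, hB⟩ := htt.bddAbove_range
  have hBub : ∀ k, t k ≤ B := fun k => hB (Set.mem_range_self k)
  have hB0 : (0 : ℝ) ≤ B := le_trans (psd_trace_nonneg (hM 0)) (hBub 0)
  have hnorm : ∀ k, ‖toH (M k)‖ ≤ n * B := by
    intro k
    have h2 : ∀ p : Fin n × Fin n, ‖M k p.1 p.2‖ ^ 2 ≤ B ^ 2 := by
      intro p
      have h3 : |M k p.1 p.2| ≤ B := le_trans (psd_abs_entry_le_trace (hM k) p.1 p.2) (hBub k)
      rw [Real.norm_eq_abs]
      nlinarith [abs_nonneg (M k p.1 p.2)]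
    calc ‖toH (M k)‖ = Real.sqrt (∑ p : Fin n × Fin n, ‖toH (M k) p‖ ^ 2) :=
          EuclideanSpace.norm_eq _
      _ ≤ Real.sqrt (∑ _p : Fin n × Fin n, B ^ 2) :=
          Real.sqrt_le_sqrt (Finset.sum_le_sum fun p _ => h2 p)
      _ ≤ n * B := by
          rw [Finset.sum_const, Finset.card_univ, nsmul_eq_mul]
          have hcard : ((Fintype.card (Fin n × Fin n) : ℝ)) = (n : ℝ) * n := by simp
          rw [hcard]
          have hh : (n : ℝ) * n * B ^ 2 = ((n : ℝ) * B) ^ 2 := by ring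
          rw [hh, Real.sqrt_sq (by positivity)]
  have hcpt : IsCompact (Metric.closedBall (0 : Hn n) (n * B)) := isCompact_closedBall _ _
  obtain ⟨a, -, φ, hφ, hφlim⟩ := hcpt.tendsto_subseq (x := fun k => toH (M k)) (fun k => by
    simpa [Metric.mem_closedBall, dist_zero_right] using hnorm k)
  have hacoord : ∀ p : Fin n × Fin n,
      Filter.Tendsto (fun k => M (φ k) p.1 p.2) Filter.atTop (nhds (a p)) := by
    intro p
    have := ((EuclideanSpace.proj p : Hn n →L[ℝ] ℝ).continuous.tendsto a).comp hφlim
    simpa [Function.comp_def, toH_apply] using this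
  set L : Matrix (Fin n) (Fin n) ℝ := Matrix.of fun i j => a (i, j) with hLdef
  have hLa : ∀ i j : Fin n, L i j = a (i, j) := fun i j => rfl
  have hLpsd : L.PosSemidef := by
    refine posSemidef_of_quad ?_ ?_
    · ext i j
      rw [Matrix.transpose_apply, hLa, hLa]
      have h1 := hacoord (j, i)
      have h2 := hacoord (i, j)
      have hsy : ∀ k, M (φ k) j i = M (φ k) i j := fun k =>
        symm_apply (isSymm_of_psd (hM (φ k))) j i
      simp only [hsy] at h1
      exact tendsto_nhds_unique h1 h2
    · intro v
      have hterm : Filter.Tendsto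
          (fun k => ∑ p : Fin n × Fin n, v p.1 * M (φ k) p.1 p.2 * v p.2) Filter.atTop
          (nhds (∑ p : Fin n × Fin n, v p.1 * L p.1 p.2 * v p.2)) := by
        refine tendsto_finset_sum _ fun p _ => ?_
        exact ((hacoord p).const_mul _).mul_const _
      refine ge_of_tendsto' hterm fun k => ?_
      rw [← dot_eq_quad]
      exact (hM (φ k)).dotProduct_mulVec_nonneg v
  refine ⟨L, hLpsd, ?_⟩
  have hcc : ∀ p : Fin n × Fin n, y p = toH (projE E L) p := by
    intro p
    have h1 : Filter.Tendsto (fun k => x (φ k) p) Filter.atTop (nhds (y p)) :=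
      (hcoord p).comp hφ.tendsto_atTop
    have h2 : Filter.Tendsto (fun k => x (φ k) p) Filter.atTop (nhds (toH (projE E L) p)) := by
      have hval : toH (projE E L) p = if (p.1, p.2) ∈ EStar E then a p else 0 := by
        rw [toH_apply, projE_apply]
        split <;> rfl
      by_cases hp : (p.1, p.2) ∈ EStar E
      · simp only [hxk, if_pos hp, hval]
        exact hacoord p
      · simp only [hxk, if_neg hp, hval]
        exact tendsto_const_nhds
    exact tendsto_nhds_unique h1 h2
  exact (WithLp.ext_iff _).2 (funext hcc)

lemma sum_swap_pairs (g : Fin n × Fin n → ℝ) :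
    ∑ p : Fin n × Fin n, g (p.2, p.1) = ∑ p : Fin n × Fin n, g p :=
  Fintype.sum_equiv (Equiv.prodComm (Fin n) (Fin n)) _ _ fun p => rfl

/-- The hard direction of the first duality: a sparse symmetric matrix nonnegative against
all sparse PSD matrices is PSD-completable. -/
lemma completable_of_dual {E : Set (Fin n × Fin n)} (hE : SymmEdges E)
    {X : Matrix (Fin n) (Fin n) ℝ} (hXs : SparseSym E X)
    (hq : ∀ Z : Matrix (Fin n) (Fin n) ℝ, SparsePSD E Z → 0 ≤ (X * Z).trace) :
    PSDCompletable E X := by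
  classical
  rw [completable_iff hE]
  by_contra hcon
  have hXK : toH X ∉ Kc E := by
    rintro ⟨M, hMpsd, hXM⟩
    exact hcon ⟨M, hMpsd, toH_inj hXM⟩
  let C : ProperCone ℝ (Hn n) :=
    { carrier := (Kc E : Set (Hn n))
      add_mem' := fun ha hb => (Kc E).add_mem ha hb
      zero_mem' := ⟨0, Matrix.PosSemidef.zero, by rw [projE_zero]; rfl⟩
      smul_mem' := by
        rintro c x ⟨M, hM, rfl⟩
        exact ⟨(c : ℝ) • M, psd_smul c.2 hM, by rw [projE_smul]; rfl⟩
      isClosed' := isClosed_Kc E }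
  obtain ⟨y, hy, hyX'⟩ := C.hyperplane_separation' (x₀ := toH X) hXK
  have hyX : ⟪y, toH X⟫_ℝ < 0 := by rw [real_inner_comm]; exact hyX'
  set Y : Matrix (Fin n) (Fin n) ℝ := Matrix.of fun i j => y (i, j) with hYdef
  have hYa : ∀ i j : Fin n, Y i j = y (i, j) := fun i j => rfl
  set W : Matrix (Fin n) (Fin n) ℝ :=
    Matrix.of fun i j => if (i, j) ∈ EStar E then (1 / 2 : ℝ) * (Y i j + Y j i) else 0
    with hWdef
  have hWa : ∀ i j : Fin n, W i j =
      if (i, j) ∈ EStar E then (1 / 2 : ℝ) * (Y i j + Y j i) else 0 := fun i j => rfl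
  have hWsymm : W.IsSymm := by
    ext i j
    rw [Matrix.transpose_apply, hWa, hWa]
    by_cases hij : (i, j) ∈ EStar E
    · rw [if_pos hij, if_pos (estar_symm hE hij)]
      ring
    · rw [if_neg hij, if_neg fun h => hij (estar_symm hE h)]
  have hWsparse : SparseSym E W := ⟨hWsymm, fun i j hij => by rw [hWa, if_neg hij]⟩
  -- key inequality: `y` is nonnegative against all projected PSD matrices
  have hkey : ∀ v : Fin n → ℝ,
      0 ≤ ∑ p : Fin n × Fin n,
        (if (p.1, p.2) ∈ EStar E then v p.1 * v p.2 * y p else 0) := by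
    intro v
    have hmem : toH (projE E (outer v)) ∈ Kc E := ⟨outer v, outer_psd v, rfl⟩
    have h0 := hy _ hmem
    rw [inner_toH_left] at h0
    refine le_of_le_of_eq h0 (Finset.sum_congr rfl fun p _ => ?_)
    rw [projE_apply]
    by_cases hp : (p.1, p.2) ∈ EStar E
    · rw [if_pos hp, if_pos hp]
      rfl
    · rw [if_neg hp, if_neg hp, zero_mul]
  have hWpsd : W.PosSemidef := by
    refine posSemidef_of_quad hWsymm ?_
    intro v
    have hsplit : ∑ p : Fin n × Fin n, v p.1 * W p.1 p.2 * v p.2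
        = (1 / 2 : ℝ) *
          ((∑ p : Fin n × Fin n,
              (if (p.1, p.2) ∈ EStar E then v p.1 * v p.2 * y p else 0))
           + (∑ p : Fin n × Fin n,
              (if (p.1, p.2) ∈ EStar E then v p.1 * v p.2 * Y p.2 p.1 else 0))) := by
      rw [← Finset.sum_add_distrib, Finset.mul_sum]
      refine Finset.sum_congr rfl fun p _ => ?_
      have hyp : y p = Y p.1 p.2 := rfl
      rw [hWa]
      by_cases hp : (p.1, p.2) ∈ EStar E
      · rw [if_pos hp, if_pos hp, if_pos hp, hyp]
        ring
      · rw [if_neg hp, if_neg hp, if_neg hp]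
        ring
    have hswap : (∑ p : Fin n × Fin n,
          (if (p.1, p.2) ∈ EStar E then v p.1 * v p.2 * Y p.2 p.1 else 0))
        = ∑ p : Fin n × Fin n,
          (if (p.1, p.2) ∈ EStar E then v p.1 * v p.2 * y p else 0) := by
      rw [← sum_swap_pairs
        (fun q : Fin n × Fin n => if (q.1, q.2) ∈ EStar E then v q.1 * v q.2 * y q else 0)]
      refine Finset.sum_congr rfl fun p _ => ?_
      have hyq : y (p.2, p.1) = Y p.2 p.1 := rfl
      by_cases hp : (p.1, p.2) ∈ EStar E
      · rw [if_pos hp, if_pos (estar_symm hE hp), hyq]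
        ring
      · rw [if_neg hp, if_neg fun h => hp (estar_symm hE h)]
    rw [hsplit, hswap]
    have := hkey v
    linarith
  have h1 : 0 ≤ (X * W).trace := hq W ⟨hWsparse, hWpsd⟩
  have h2 : (X * W).trace = ⟪y, toH X⟫_ℝ := by
    rw [trace_mul_eq, inner_toH']
    have step1 : ∑ p : Fin n × Fin n, X p.1 p.2 * W p.2 p.1
        = ∑ p : Fin n × Fin n, X p.1 p.2 * W p.1 p.2 :=
      Finset.sum_congr rfl fun p _ => by rw [symm_apply hWsymm p.2 p.1]
    have step2 : ∑ p : Fin n × Fin n, X p.1 p.2 * W p.1 p.2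
        = (1 / 2 : ℝ) * ((∑ p : Fin n × Fin n, X p.1 p.2 * y p)
            + ∑ p : Fin n × Fin n, X p.1 p.2 * Y p.2 p.1) := by
      rw [← Finset.sum_add_distrib, Finset.mul_sum]
      refine Finset.sum_congr rfl fun p _ => ?_
      have hyp : y p = Y p.1 p.2 := rfl
      rw [hWa]
      by_cases hp : (p.1, p.2) ∈ EStar E
      · rw [if_pos hp, hyp]
        ring
      · rw [if_neg hp, hXs.2 p.1 p.2 hp]
        ring
    have step3 : ∑ p : Fin n × Fin n, X p.1 p.2 * Y p.2 p.1
        = ∑ p : Fin n × Fin n, X p.1 p.2 * y p := by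
      rw [← sum_swap_pairs (fun q : Fin n × Fin n => X q.1 q.2 * y q)]
      refine Finset.sum_congr rfl fun p _ => ?_
      have hyq : y (p.2, p.1) = Y p.2 p.1 := rfl
      rw [hyq, symm_apply hXs.1 p.1 p.2]
    have step4 : ∑ p : Fin n × Fin n, y p * X p.1 p.2
        = ∑ p : Fin n × Fin n, X p.1 p.2 * y p :=
      Finset.sum_congr rfl fun p _ => mul_comm _ _
    rw [step1, step2, step3, step4]
    ring
  rw [h2] at h1
  exact absurd hyX (not_lt.2 h1)

/-- The hard direction of the second duality. -/
lemma psd_of_dual {E : Set (Fin n × Fin n)} (hE : SymmEdges E)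
    {Z : Matrix (Fin n) (Fin n) ℝ} (hZs : SparseSym E Z)
    (h : ∀ X : Matrix (Fin n) (Fin n) ℝ, PSDCompletable E X → 0 ≤ (Z * X).trace) :
    Z.PosSemidef := by
  refine posSemidef_of_quad hZs.1 ?_
  intro v
  have hc : PSDCompletable E (projE E (outer v)) :=
    (completable_iff hE _).2 ⟨outer v, outer_psd v, rfl⟩
  have h0 := h _ hc
  have he : (Z * projE E (outer v)).trace = (Z * outer v).trace :=
    sparse_trace_congr hE hZs.2 fun i j hij => by rw [projE_apply, if_pos hij]
  rw [he, trace_mul_eq] at h0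
  refine le_of_le_of_eq h0 (Finset.sum_congr rfl fun p _ => ?_)
  show Z p.1 p.2 * (v p.2 * v p.1) = v p.1 * Z p.1 p.2 * v p.2
  ring

lemma completable_mem_dual {E : Set (Fin n × Fin n)} (hE : SymmEdges E)
    {X : Matrix (Fin n) (Fin n) ℝ} (hX : PSDCompletable E X)
    {Z : Matrix (Fin n) (Fin n) ℝ} (hZ : SparsePSD E Z) : 0 ≤ (X * Z).trace := by
  obtain ⟨hXs, M, hM, hag⟩ := hX
  rw [Matrix.trace_mul_comm,
    sparse_trace_congr hE hZ.1.2 fun i j hij => (hag i j hij).symm]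
  exact psd_trace_mul_nonneg hZ.2 hM

lemma sparse_mem_dual {E : Set (Fin n × Fin n)} (hE : SymmEdges E)
    {Z : Matrix (Fin n) (Fin n) ℝ} (hZ : SparsePSD E Z)
    {X : Matrix (Fin n) (Fin n) ℝ} (hX : PSDCompletable E X) : 0 ≤ (Z * X).trace := by
  obtain ⟨hXs, M, hM, hag⟩ := hX
  rw [sparse_trace_congr hE hZ.1.2 fun i j hij => (hag i j hij).symm]
  exact psd_trace_mul_nonneg hZ.2 hM

end SparseDualAux

/-- For any undirected graph `G(V,E)`, the cones `S^n_+(E,?)` and `S^n_+(E,0)` are dual to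
each other with respect to the trace inner product in the space `S^n(E,0)`. -/
theorem sparse_cones_dual {n : ℕ} (E : Set (Fin n × Fin n)) (hE : SymmEdges E) :
    ({X : Matrix (Fin n) (Fin n) ℝ | PSDCompletable E X} =
      {X : Matrix (Fin n) (Fin n) ℝ |
        SparseSym E X ∧ ∀ Z : Matrix (Fin n) (Fin n) ℝ, SparsePSD E Z → 0 ≤ (X * Z).trace}) ∧
    ({Z : Matrix (Fin n) (Fin n) ℝ | SparsePSD E Z} =
      {Z : Matrix (Fin n) (Fin n) ℝ |
        SparseSym E Z ∧ ∀ X : Matrix (Fin n) (Fin n) ℝ, PSDCompletable E X →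
          0 ≤ (Z * X).trace}) := by
  constructor
  · ext X
    simp only [Set.mem_setOf_eq]
    constructor
    · intro hX
      exact ⟨hX.1, fun Z hZ => completable_mem_dual hE hX hZ⟩
    · rintro ⟨hXs, hq⟩
      exact completable_of_dual hE hXs hq
  · ext Z
    simp only [Set.mem_setOf_eq]
    constructor
    · intro hZ
      exact ⟨hZ.1, fun X hX => sparse_mem_dual hE hZ hX⟩
    · rintro ⟨hZs, hq⟩
      exact ⟨hZs, psd_of_dual hE hZs hq⟩
end

section
/- Let G(V,E) be a chordal graph with maximal cliques C_1, …, C_p, and suppose C ∈ S^n(E,0) and A_i ∈ S^n(E,0) for i = 1, …, m. Then the optimal value of inf{⟨C,X⟩ : ⟨A_i,X⟩ = b_i for i = 1,…,m, X ∈ S^n_+(E,?)} equals the optimal value of the domain-space decomposed SDP inf{⟨C,X⟩ : ⟨A_i,X⟩ = b_i for i = 1,…,m, X_k = E_{C_k} X E_{C_k}^T and X_k ⪰ 0 for k = 1,…,p}, where the second infimum is over X ∈ S^n(E,0) and X_1 ∈ S^{|C_1|}, …, X_p ∈ S^{|C_p|}. -/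
open Matrix BigOperators

section Aux

variable {n : ℕ}

/-- A simplicial vertex: its neighborhood is a clique. -/
def Simp (E : Set (Fin n × Fin n)) (v : Fin n) : Prop :=
  ∀ a b : Fin n, (v, a) ∈ E → (v, b) ∈ E → a ≠ b → (a, b) ∈ E

/-- Restriction of the edge set to a vertex subset. -/
def EOn (E : Set (Fin n × Fin n)) (A : Finset (Fin n)) : Set (Fin n × Fin n) :=
  {q ∈ E | q.1 ∈ A ∧ q.2 ∈ A}

/-- Reachability within a vertex set `B`. -/
def Reach (E : Set (Fin n × Fin n)) (B : Set (Fin n)) : Fin n → Fin n → Prop :=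
  Relation.ReflTransGen (fun u w => u ∈ B ∧ w ∈ B ∧ (u, w) ∈ E)

/-- Connected component of `z` within `B`. -/
def compS (E : Set (Fin n × Fin n)) (B : Set (Fin n)) (z : Fin n) : Set (Fin n) :=
  {w | w ∈ B ∧ Reach E B z w}

/-- A path from `x` to `y` (as a function, of `len` vertices) whose interior lies in `Cmp`. -/
def IsPathN (E : Set (Fin n × Fin n)) (Cmp : Set (Fin n)) (x y : Fin n)
    (f : ℕ → Fin n) (len : ℕ) : Prop :=
  2 ≤ len ∧ f 0 = x ∧ f (len - 1) = y ∧ (∀ i, i + 1 < len → (f i, f (i + 1)) ∈ E) ∧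
    (∀ i, 0 < i → i + 1 < len → f i ∈ Cmp)

lemma reach_symm {E : Set (Fin n × Fin n)} (hE : SymmEdges E) {B : Set (Fin n)}
    {u w : Fin n} (h : Reach E B u w) : Reach E B w u :=
  letI : Std.Symm (fun u w : Fin n => u ∈ B ∧ w ∈ B ∧ (u, w) ∈ E) :=
    ⟨fun _ _ h' => ⟨h'.2.1, h'.1, hE _ _ h'.2.2⟩⟩
  (Relation.ReflTransGen.stdSymm (r := fun u w : Fin n => u ∈ B ∧ w ∈ B ∧ (u, w) ∈ E)).symm _ _ h

lemma reach_to_path {E : Set (Fin n × Fin n)} {B : Set (Fin n)} {u w : Fin n}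
    (hu : u ∈ B) (h : Reach E B u w) :
    ∃ (f : ℕ → Fin n) (len : ℕ), 1 ≤ len ∧ f 0 = u ∧ f (len - 1) = w ∧
      (∀ i, i + 1 < len → (f i, f (i + 1)) ∈ E) ∧ (∀ i, i < len → f i ∈ B) := by
  induction h with
  | refl => exact ⟨fun _ => u, 1, le_refl 1, rfl, rfl, fun i hi => by omega, fun i _ => hu⟩
  | @tail b c hab hbc ih =>
    obtain ⟨f, len, h1, h2, h3, h4, h5⟩ := ih
    refine ⟨fun i => if i < len then f i else c, len + 1, by omega, ?_, ?_, ?_, ?_⟩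
    · simp only [if_pos (by omega : 0 < len)]; exact h2
    · simp [Nat.add_sub_cancel]
    · intro i hi
      rcases Nat.lt_or_ge (i + 1) len with h | h
      · simp only [if_pos (by omega : i < len), if_pos h]; exact h4 i h
      · have hi1 : i + 1 = len := by omega
        simp only [if_pos (by omega : i < len), if_neg (by omega : ¬ i + 1 < len)]
        have : f i = b := by rw [show i = len - 1 by omega]; exact h3
        rw [this]; exact hbc.2.2
    · intro i hi
      rcases Nat.lt_or_ge i len with h | h
      · simp only [if_pos h]; exact h5 i h
      · simp only [if_neg (by omega : ¬ i < len)]; exact hbc.2.1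

lemma exists_min_path {E : Set (Fin n × Fin n)} {Cmp : Set (Fin n)} {x y : Fin n}
    (h : ∃ f len, IsPathN E Cmp x y f len) :
    ∃ f len, IsPathN E Cmp x y f len ∧
      ∀ f' len', IsPathN E Cmp x y f' len' → len ≤ len' := by
  classical
  obtain ⟨f0, L0, h0⟩ := h
  have hP : ∃ L, ∃ f, IsPathN E Cmp x y f L := ⟨L0, f0, h0⟩
  obtain ⟨f, hf⟩ := Nat.find_spec hP
  exact ⟨f, Nat.find hP, hf, fun f' len' h' => Nat.find_min' hP ⟨f', h'⟩⟩

lemma shortcut {E : Set (Fin n × Fin n)} {Cmp : Set (Fin n)} {x y : Fin n}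
    {f : ℕ → Fin n} {len : ℕ} (hp : IsPathN E Cmp x y f len)
    (hmin : ∀ f' len', IsPathN E Cmp x y f' len' → len ≤ len')
    {p q : ℕ} (hpq : p + 2 ≤ q) (hq : q < len) (he : (f p, f q) ∈ E) : False := by
  obtain ⟨hlen, hx, hy, hadj, hint⟩ := hp
  set o := q - p - 1 with ho
  have ho1 : 1 ≤ o := by omega
  set f' : ℕ → Fin n := fun i => if i ≤ p then f i else f (i + o) with hf'
  have hle : len ≤ len - o := by
    refine hmin f' (len - o) ⟨by omega, ?_, ?_, ?_, ?_⟩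
    · simp only [hf', if_pos (Nat.zero_le p)]; exact hx
    · have h1 : ¬ (len - o - 1 ≤ p) := by omega
      simp only [hf', if_neg h1]
      rw [show len - o - 1 + o = len - 1 by omega]; exact hy
    · intro i hi
      rcases Nat.lt_or_ge (i + 1) (p + 1) with h | h
      · simp only [hf', if_pos (by omega : i ≤ p), if_pos (by omega : i + 1 ≤ p)]
        exact hadj i (by omega)
      · rcases Nat.eq_or_lt_of_le h with h' | h'
        · simp only [hf', if_pos (by omega : i ≤ p), if_neg (by omega : ¬ i + 1 ≤ p)]
          rw [show i = p by omega, show p + 1 + o = q by omega]; exact he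
        · simp only [hf', if_neg (by omega : ¬ i ≤ p), if_neg (by omega : ¬ i + 1 ≤ p)]
          rw [show i + 1 + o = i + o + 1 by omega]
          exact hadj (i + o) (by omega)
    · intro i h0 hi
      rcases Nat.lt_or_ge p i with h | h
      · simp only [hf', if_neg (by omega : ¬ i ≤ p)]
        exact hint (i + o) (by omega) (by omega)
      · simp only [hf', if_pos h]
        exact hint i h0 (by omega)
  omega

lemma path_nodup {E : Set (Fin n × Fin n)} {Cmp : Set (Fin n)} {x y : Fin n}
    {f : ℕ → Fin n} {len : ℕ} (hp : IsPathN E Cmp x y f len)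
    (hmin : ∀ f' len', IsPathN E Cmp x y f' len' → len ≤ len')
    (hxy : x ≠ y)
    {p q : ℕ} (hplt : p < q) (hq : q < len) : f p ≠ f q := by
  intro heq
  obtain ⟨hlen, hx, hy, hadj, hint⟩ := hp
  rcases Nat.eq_or_lt_of_le (Nat.succ_le_of_lt hq) with hql | hql
  · -- q = len - 1, so f p = y
    have hyq : f q = y := by rw [show q = len - 1 by omega]; exact hy
    rcases Nat.eq_zero_or_pos p with hp0 | hp0
    · refine hxy ?_
      rw [← hx, show (0:ℕ) = p from hp0.symm]
      exact heq.trans hyq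
    · have : len ≤ p + 1 := by
        refine hmin f (p + 1) ⟨by omega, hx, ?_, fun i hi => hadj i (by omega),
          fun i h0 hi => hint i h0 (by omega)⟩
        simpa [Nat.add_sub_cancel] using heq.trans hyq
      omega
  · -- q < len - 1: compress
    set o := q - p with ho
    have ho1 : 1 ≤ o := by omega
    set f' : ℕ → Fin n := fun i => if i ≤ p then f i else f (i + o) with hf'
    have hle : len ≤ len - o := by
      refine hmin f' (len - o) ⟨by omega, ?_, ?_, ?_, ?_⟩
      · simp only [hf', if_pos (Nat.zero_le p)]; exact hx
      · have h1 : ¬ (len - o - 1 ≤ p) := by omega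
        simp only [hf', if_neg h1]
        rw [show len - o - 1 + o = len - 1 by omega]; exact hy
      · intro i hi
        rcases Nat.lt_or_ge (i + 1) (p + 1) with h | h
        · simp only [hf', if_pos (by omega : i ≤ p), if_pos (by omega : i + 1 ≤ p)]
          exact hadj i (by omega)
        · rcases Nat.eq_or_lt_of_le h with h' | h'
          · simp only [hf', if_pos (by omega : i ≤ p), if_neg (by omega : ¬ i + 1 ≤ p)]
            rw [show i = p by omega, show p + 1 + o = q + 1 by omega, heq]
            exact hadj q (by omega)
          · simp only [hf', if_neg (by omega : ¬ i ≤ p), if_neg (by omega : ¬ i + 1 ≤ p)]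
            rw [show i + 1 + o = i + o + 1 by omega]
            exact hadj (i + o) (by omega)
      · intro i h0 hi
        rcases Nat.lt_or_ge p i with h | h
        · simp only [hf', if_neg (by omega : ¬ i ≤ p)]
          exact hint (i + o) (by omega) (by omega)
        · simp only [hf', if_pos h]
          exact hint i h0 (by omega)
    omega

lemma no_chordless_cycle {E : Set (Fin n × Fin n)} (hE : SymmEdges E) (hch : IsChordal E)
    (c : ℕ) (hc : 4 ≤ c) (v : ℕ → Fin n)
    (hinj : ∀ p q, p < c → q < c → v p = v q → p = q)
    (hadj : ∀ p, p + 1 < c → (v p, v (p + 1)) ∈ E)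
    (hwrap : (v (c - 1), v 0) ∈ E)
    (hnochord : ∀ p q, p + 2 ≤ q → q < c → ¬(p = 0 ∧ q = c - 1) → (v p, v q) ∉ E) :
    False := by
  obtain ⟨k, rfl⟩ : ∃ k, c = k + 1 := ⟨c - 1, by omega⟩
  have hk1 : k + 1 - 1 = k := by omega
  set vf : Fin (k + 1) → Fin n := fun i => v i.val with hvf
  have hcyc : IsCycle E vf := by
    constructor
    · intro i j hij
      exact Fin.ext (hinj i.val j.val i.isLt j.isLt hij)
    · intro i
      rcases Nat.lt_or_ge (i.val + 1) (k + 1) with h | h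
      · have hlast : i < Fin.last k := by
          rw [Fin.lt_iff_val_lt_val, Fin.val_last]; omega
        have h1 : (i + 1).val = i.val + 1 := Fin.val_add_one_of_lt hlast
        show (v i.val, v (i+1).val) ∈ E
        rw [h1]; exact hadj i.val h
      · have hik : i = Fin.last k := by
          apply Fin.ext; rw [Fin.val_last]
          have := i.isLt; omega
        have h0 : i + 1 = 0 := by rw [hik]; exact Fin.last_add_one k
        show (v i.val, v (i+1).val) ∈ E
        rw [h0, hik]
        simpa [Fin.val_last, hk1] using hwrap
  obtain ⟨i, j, hij, hji1, hij1, he⟩ := hch k hc vf hcyc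
  have key : ∀ i j : Fin (k + 1), j ≠ i + 1 → i ≠ j + 1 → i.val < j.val →
      (vf i, vf j) ∈ E → False := by
    intro i j hji1 hij1 hlt hedge
    have hjk : j.val < k + 1 := j.isLt
    have hik : i.val < k := by omega
    have hi1 : (i + 1).val = i.val + 1 := by
      apply Fin.val_add_one_of_lt
      rw [Fin.lt_iff_val_lt_val, Fin.val_last]; omega
    have hq2 : i.val + 2 ≤ j.val := by
      have : j.val ≠ i.val + 1 := by
        intro h
        exact hji1 (Fin.ext (by rw [hi1, ← h]))
      omega
    have hne : ¬(i.val = 0 ∧ j.val = k + 1 - 1) := by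
      rintro ⟨h0, hkk⟩
      rw [hk1] at hkk
      apply hij1
      have hjl : j = Fin.last k := Fin.ext (by rw [Fin.val_last]; exact hkk)
      apply Fin.ext
      rw [hjl, Fin.last_add_one, h0]
      rfl
    exact hnochord i.val j.val hq2 j.isLt hne hedge
  rcases lt_trichotomy i.val j.val with h | h | h
  · exact key i j hji1 hij1 h he
  · exact hij (Fin.ext h)
  · exact key j i hij1 hji1 h (hE _ _ he)

lemma connect_path {E : Set (Fin n × Fin n)} {Cmp : Set (Fin n)} {x y u u' : Fin n}
    (hxu : (x, u) ∈ E) (hu'y : (u', y) ∈ E) (huC : u ∈ Cmp) (hreach : Reach E Cmp u u') :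
    ∃ f len, IsPathN E Cmp x y f len := by
  obtain ⟨g, len, h1, h2, h3, h4, h5⟩ := reach_to_path huC hreach
  refine ⟨fun i => if i = 0 then x else if i ≤ len then g (i - 1) else y, len + 2,
    by omega, by simp, ?_, ?_, ?_⟩
  · rw [show len + 2 - 1 = len + 1 by omega]
    simp only [if_neg (by omega : ¬ len + 1 = 0), if_neg (by omega : ¬ len + 1 ≤ len)]
  · intro i hi
    rcases Nat.eq_zero_or_pos i with h0 | h0
    · subst h0
      simp only [if_pos rfl, if_neg (by omega : ¬ (1:ℕ) = 0), if_pos (by omega : 1 ≤ len)]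
      rw [show (1:ℕ) - 1 = 0 by omega, h2]; exact hxu
    · rcases Nat.lt_or_ge i len with h | h
      · simp only [if_neg (by omega : ¬ i = 0), if_pos (by omega : i ≤ len),
          if_neg (by omega : ¬ i + 1 = 0), if_pos (by omega : i + 1 ≤ len)]
        rw [show i + 1 - 1 = (i - 1) + 1 by omega]
        exact h4 (i - 1) (by omega)
      · have hil : i = len := by omega
        subst hil
        simp only [if_neg (by omega : ¬ i = 0), if_pos (le_refl i),
          if_neg (by omega : ¬ i + 1 = 0), if_neg (by omega : ¬ i + 1 ≤ i)]
        rw [show i - 1 = i - 1 from rfl, h3]; exact hu'y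
  · intro i h0 hi
    simp only [if_neg (by omega : ¬ i = 0), if_pos (by omega : i ≤ len)]
    exact h5 (i - 1) (by omega)

lemma two_paths_contra {E : Set (Fin n × Fin n)} (hE : SymmEdges E) (hch : IsChordal E)
    {Ca Cb : Set (Fin n)}
    (hdisj : ∀ z, z ∈ Ca → z ∈ Cb → False)
    (hnoedge : ∀ z w, z ∈ Ca → w ∈ Cb → (z, w) ∉ E)
    {x y : Fin n} (hxy : x ≠ y) (hnadj : (x, y) ∉ E)
    (hxCb : x ∉ Cb) (hyCb : y ∉ Cb)
    (hpa : ∃ f len, IsPathN E Ca x y f len) (hpb : ∃ f len, IsPathN E Cb x y f len) :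
    False := by
  obtain ⟨fa, ra, hfa, hmina⟩ := exists_min_path hpa
  obtain ⟨fb, rb, hfb, hminb⟩ := exists_min_path hpb
  have hra3 : 3 ≤ ra := by
    by_contra h
    have h2 : ra = 2 := by have := hfa.1; omega
    have := hfa.2.2.2.1 0 (by omega)
    rw [hfa.2.1] at this
    have hy : fa (ra - 1) = y := hfa.2.2.1
    rw [h2] at hy
    rw [show (0:ℕ) + 1 = 2 - 1 by omega, hy] at this
    exact hnadj this
  have hrb3 : 3 ≤ rb := by
    by_contra h
    have h2 : rb = 2 := by have := hfb.1; omega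
    have := hfb.2.2.2.1 0 (by omega)
    rw [hfb.2.1] at this
    have hy : fb (rb - 1) = y := hfb.2.2.1
    rw [h2] at hy
    rw [show (0:ℕ) + 1 = 2 - 1 by omega, hy] at this
    exact hnadj this
  set c := ra + rb - 2 with hcdef
  set v : ℕ → Fin n := fun p => if p < ra then fa p else fb (c - p) with hv
  have hva : ∀ p, p < ra → v p = fa p := fun p hp => by simp only [hv, if_pos hp]
  have hvb : ∀ p, ra - 1 ≤ p → p < c → v p = fb (c - p) := by
    intro p h1 h2
    rcases Nat.lt_or_ge p ra with h | h
    · have hp : p = ra - 1 := by omega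
      subst hp
      rw [hva _ h, hfa.2.2.1, show c - (ra - 1) = rb - 1 by omega, hfb.2.2.1]
    · simp only [hv, if_neg (by omega : ¬ p < ra)]
  have hintb : ∀ p, ra ≤ p → p < c → v p ∈ Cb := by
    intro p h1 h2
    rw [hvb p (by omega) h2]
    exact hfb.2.2.2.2 (c - p) (by omega) (by omega)
  have hinj' : ∀ p q, p < q → q < c → v p = v q → False := by
    intro p q hpq hq heq
    rcases Nat.lt_or_ge q ra with h | h
    · rw [hva p (by omega), hva q h] at heq
      exact path_nodup hfa hmina hxy hpq (by omega) heq
    · rcases Nat.lt_or_ge p ra with h2 | h2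
      · have hqb : v q ∈ Cb := hintb q h hq
        rcases Nat.eq_zero_or_pos p with h0 | h0
        · subst h0
          rw [hva 0 (by omega), hfa.2.1] at heq
          exact hxCb (heq ▸ hqb)
        · rcases Nat.eq_or_lt_of_le (by omega : p + 1 ≤ ra) with h1 | h1
          · have hp : p = ra - 1 := by omega
            rw [hva p h2, hp, hfa.2.2.1] at heq
            exact hyCb (heq ▸ hqb)
          · have hpa' : v p ∈ Ca := by
              rw [hva p h2]
              exact hfa.2.2.2.2 p h0 (by omega)
            exact hdisj _ hpa' (heq ▸ hqb)
      · rw [hvb p (by omega) (by omega), hvb q (by omega) hq] at heq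
        exact path_nodup hfb hminb hxy (by omega : c - q < c - p) (by omega) heq.symm
  refine no_chordless_cycle hE hch c (by omega) v ?_ ?_ ?_ ?_
  · intro p q hp hq heq
    rcases lt_trichotomy p q with h | h | h
    · exact absurd heq (fun heq => hinj' p q h hq heq)
    · exact h
    · exact absurd heq (fun heq => hinj' q p h hp heq.symm)
  · intro p hp
    rcases Nat.lt_or_ge (p + 1) ra with h | h
    · rw [hva p (by omega), hva (p + 1) h]
      exact hfa.2.2.2.1 p h
    · rw [hvb p (by omega) (by omega), hvb (p + 1) (by omega) hp]
      rw [show c - (p + 1) = (c - p) - 1 by omega]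
      apply hE
      rw [show c - p = ((c - p) - 1) + 1 by omega]
      exact hfb.2.2.2.1 ((c - p) - 1) (by omega)
  · rw [hvb (c - 1) (by omega) (by omega), hva 0 (by omega), hfa.2.1,
      show c - (c - 1) = 1 by omega]
    apply hE
    rw [show x = fb 0 from hfb.2.1.symm]
    exact hfb.2.2.2.1 0 (by omega)
  · intro p q hpq hq hne he
    rcases Nat.lt_or_ge q ra with h | h
    · rw [hva p (by omega), hva q h] at he
      exact shortcut hfa hmina hpq h he
    · rcases Nat.lt_or_ge p (ra - 1) with h2 | h2
      · rcases Nat.eq_zero_or_pos p with h0 | h0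
        · subst h0
          have hqc : q ≠ c - 1 := fun hqc => hne ⟨rfl, hqc⟩
          rw [hva 0 (by omega), hfa.2.1, hvb q (by omega) hq] at he
          have : (fb 0, fb (c - q)) ∈ E := by rw [hfb.2.1]; exact he
          exact shortcut hfb hminb (by omega : 0 + 2 ≤ c - q) (by omega) this
        · have hpa' : v p ∈ Ca := by
            rw [hva p (by omega)]
            exact hfa.2.2.2.2 p h0 (by omega)
          exact hnoedge _ _ hpa' (hintb q h hq) he
      · rw [hvb p h2 (by omega), hvb q (by omega) hq] at he
        exact shortcut hfb hminb (by omega : (c - q) + 2 ≤ c - p) (by omega) (hE _ _ he)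

lemma reach_in_comp {E : Set (Fin n × Fin n)} {B : Set (Fin n)} {r u : Fin n}
    (hu : u ∈ compS E B r) : ∀ w, Reach E B u w → Reach E (compS E B r) u w := by
  intro w h
  induction h with
  | refl => exact Relation.ReflTransGen.refl
  | @tail y z hy hyz ih =>
    have hyC : y ∈ compS E B r := ⟨hyz.1, hu.2.trans hy⟩
    have hzC : z ∈ compS E B r := ⟨hyz.2.1, hu.2.trans (hy.tail hyz)⟩
    exact ih.tail ⟨hyC, hzC, hyz.2.2⟩

/-- Every chordal graph whose edges lie inside `A` is either a clique on `A`, or has two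
nonadjacent simplicial vertices in `A`. -/
lemma dirac_strong : ∀ (N : ℕ) (A : Finset (Fin n)), A.card ≤ N →
    ∀ (E : Set (Fin n × Fin n)), SymmEdges E → (∀ i, (i, i) ∉ E) → IsChordal E →
    (∀ e ∈ E, e.1 ∈ A ∧ e.2 ∈ A) →
    IsClique E A ∨ ∃ u₁ ∈ A, ∃ u₂ ∈ A, u₁ ≠ u₂ ∧ (u₁, u₂) ∉ E ∧ Simp E u₁ ∧ Simp E u₂ := by
  intro N
  induction N with
  | zero =>
    intro A hA E _ _ _ _
    left
    intro i hi
    have hAe : A = ∅ := Finset.card_eq_zero.mp (by omega)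
    rw [hAe] at hi
    simp at hi
  | succ N ih =>
    intro A hA E hE hirr hch hsub
    classical
    by_cases hclq : IsClique E A
    · exact Or.inl hclq
    right
    unfold IsClique at hclq
    push_neg at hclq
    obtain ⟨a, ha, b, hb, hab, hnadj⟩ := hclq
    set SepOK : Finset (Fin n) → Prop :=
      fun S => S ⊆ A ∧ a ∉ S ∧ b ∉ S ∧ ¬ Reach E (↑A \ ↑S) a b with hSepOK
    have hS0 : SepOK ((A.erase a).erase b) := by
      refine ⟨(Finset.erase_subset _ _).trans (Finset.erase_subset _ _),
        fun h => Finset.notMem_erase a A (Finset.mem_of_mem_erase h),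
        Finset.notMem_erase b _, ?_⟩
      intro hr
      have hkey0 : ∀ z, Reach E (↑A \ ↑((A.erase a).erase b)) a z → z = a := by
        intro z hz
        induction hz with
        | refl => rfl
        | @tail y z hay hyz ihz =>
          have hya : y = a := ihz
          rw [hya] at hyz
          have hzm : z ∈ (↑A \ ↑((A.erase a).erase b) : Set (Fin n)) := hyz.2.1
          have hzA : z ∈ A := hzm.1
          rcases Classical.em (z = a) with h | h
          · exact h
          · rcases Classical.em (z = b) with h2 | h2
            · exact absurd (h2 ▸ hyz.2.2) hnadj
            · exact absurd (Finset.mem_coe.mpr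
                (Finset.mem_erase.mpr ⟨h2, Finset.mem_erase.mpr ⟨h, hzA⟩⟩)) hzm.2
      exact hab ((hkey0 b hr).symm)
    set 𝒮 := A.powerset.filter SepOK with h𝒮
    have h𝒮ne : 𝒮.Nonempty :=
      ⟨(A.erase a).erase b, Finset.mem_filter.mpr
        ⟨Finset.mem_powerset.mpr hS0.1, hS0⟩⟩
    obtain ⟨S, hSmem, hSmin⟩ := Finset.exists_min_image 𝒮 Finset.card h𝒮ne
    have hSok : SepOK S := (Finset.mem_filter.mp hSmem).2
    obtain ⟨hSA, haS, hbS, hSep⟩ := hSok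
    set B : Set (Fin n) := ↑A \ ↑S with hB
    have haB : a ∈ B := ⟨Finset.mem_coe.mpr ha, fun h => haS (Finset.mem_coe.mp h)⟩
    have hbB : b ∈ B := ⟨Finset.mem_coe.mpr hb, fun h => hbS (Finset.mem_coe.mp h)⟩
    have hclose : ∀ (r z w : Fin n), z ∈ compS E B r → w ∈ B → (z, w) ∈ E →
        w ∈ compS E B r := by
      intro r z w hz hw he
      exact ⟨hw, hz.2.tail ⟨hz.1, hw, he⟩⟩
    have hdisjab : ∀ z, z ∈ compS E B a → z ∈ compS E B b → False := by
      intro z hza hzb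
      exact hSep (hza.2.trans (reach_symm hE hzb.2))
    have hkey : ∀ (r : Fin n), r ∈ B → ∀ x ∈ S,
        (∀ u, u ∈ compS E B r → (x, u) ∉ E) →
        ∀ w, Reach E (↑A \ ↑(S.erase x)) r w → w ∈ compS E B r := by
      intro r hr x hxS hno w hw
      induction hw with
      | refl => exact ⟨hr, Relation.ReflTransGen.refl⟩
      | @tail y z hry hyz ihz =>
        have hy : y ∈ compS E B r := ihz
        have hz' : z ∈ (↑A \ ↑(S.erase x) : Set (Fin n)) := hyz.2.1
        by_cases hzx : z = x
        · exact absurd (hE _ _ (hzx ▸ hyz.2.2)) (hno y hy)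
        · have hzB : z ∈ B := by
            refine ⟨hz'.1, fun hzS => ?_⟩
            exact hz'.2 (Finset.mem_coe.mpr
              (Finset.mem_erase.mpr ⟨hzx, Finset.mem_coe.mp hzS⟩))
          exact hclose r y z hy hzB hyz.2.2
    have hcardS : ∀ x ∈ S, ¬ SepOK (S.erase x) := by
      intro x hx hsep'
      have hmem : S.erase x ∈ 𝒮 := Finset.mem_filter.mpr
        ⟨Finset.mem_powerset.mpr hsep'.1, hsep'⟩
      have h1 := hSmin (S.erase x) hmem
      have h2 : (S.erase x).card = S.card - 1 := Finset.card_erase_of_mem hx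
      have h3 : 1 ≤ S.card := Finset.card_pos.mpr ⟨x, hx⟩
      omega
    have hnbra : ∀ x ∈ S, ∃ u ∈ compS E B a, (x, u) ∈ E := by
      intro x hx
      by_contra hno
      push_neg at hno
      refine hcardS x hx ⟨(Finset.erase_subset _ _).trans hSA,
        fun h => haS (Finset.mem_of_mem_erase h),
        fun h => hbS (Finset.mem_of_mem_erase h), fun hr => ?_⟩
      exact hSep (hkey a haB x hx hno b hr).2
    have hnbrb : ∀ x ∈ S, ∃ u ∈ compS E B b, (x, u) ∈ E := by
      intro x hx
      by_contra hno
      push_neg at hno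
      refine hcardS x hx ⟨(Finset.erase_subset _ _).trans hSA,
        fun h => haS (Finset.mem_of_mem_erase h),
        fun h => hbS (Finset.mem_of_mem_erase h), fun hr => ?_⟩
      exact hSep (reach_symm hE (hkey b hbB x hx hno a (reach_symm hE hr)).2)
    have hnoedgeab : ∀ z w, z ∈ compS E B a → w ∈ compS E B b → (z, w) ∉ E := by
      intro z w hz hw he
      exact hdisjab w (hclose a z w hz hw.1 he) hw
    have hSclq : IsClique E S := by
      intro x hx y hy hxy
      by_contra hnadjxy
      obtain ⟨ua, huaC, hxua⟩ := hnbra x hx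
      obtain ⟨va, hvaC, hyva⟩ := hnbra y hy
      obtain ⟨ub, hubC, hxub⟩ := hnbrb x hx
      obtain ⟨vb, hvbC, hyvb⟩ := hnbrb y hy
      have hpa : ∃ f len, IsPathN E (compS E B a) x y f len := by
        refine connect_path hxua (hE _ _ hyva) huaC ?_
        exact reach_in_comp huaC va ((reach_symm hE huaC.2).trans hvaC.2)
      have hpb : ∃ f len, IsPathN E (compS E B b) x y f len := by
        refine connect_path hxub (hE _ _ hyvb) hubC ?_
        exact reach_in_comp hubC vb ((reach_symm hE hubC.2).trans hvbC.2)
      refine two_paths_contra hE hch hdisjab hnoedgeab hxy hnadjxy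
        (fun h => h.1.2 (Finset.mem_coe.mpr hx)) (fun h => h.1.2 (Finset.mem_coe.mpr hy))
        hpa hpb
    have hside : ∀ r w0, r ∈ B → w0 ∈ A → w0 ∉ compS E B r → w0 ∉ S →
        (∀ x ∈ S, ∃ u ∈ compS E B r, (x, u) ∈ E) →
        ∃ u, u ∈ compS E B r ∧ Simp E u := by
      intro r w0 hrB hw0A hw0nc hw0S _
      set A' : Finset (Fin n) := A.filter (fun z => z ∈ S ∨ z ∈ compS E B r) with hA'
      have hA'sub : A' ⊆ A := Finset.filter_subset _ _
      have hw0' : w0 ∉ A' := by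
        intro h
        rcases (Finset.mem_filter.mp h).2 with h2 | h2
        · exact hw0S h2
        · exact hw0nc h2
      have hcard : A'.card < A.card :=
        Finset.card_lt_card ⟨hA'sub, fun hsub' => hw0' (hsub' hw0A)⟩
      have hSin : ∀ x ∈ S, x ∈ A' := fun x hx =>
        Finset.mem_filter.mpr ⟨hSA hx, Or.inl hx⟩
      have hCin : ∀ z, z ∈ compS E B r → z ∈ A' := fun z hz =>
        Finset.mem_filter.mpr ⟨Finset.mem_coe.mp hz.1.1, Or.inr hz⟩
      have hnb : ∀ z w, z ∈ compS E B r → (z, w) ∈ E → w ∈ A' := by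
        intro z w hz he
        have hwA : w ∈ A := (hsub _ he).2
        by_cases hwS : w ∈ S
        · exact hSin w hwS
        · exact hCin w (hclose r z w hz ⟨Finset.mem_coe.mpr hwA,
            fun h => hwS (Finset.mem_coe.mp h)⟩ he)
      set E' := EOn E A' with hE'def
      have hE'symm : SymmEdges E' := fun i j h => ⟨hE _ _ h.1, h.2.2, h.2.1⟩
      have hE'irr : ∀ i, (i, i) ∉ E' := fun i h => hirr i h.1
      have hE'ch : IsChordal E' := by
        intro k hk vv hvv
        have hvA : ∀ i, vv i ∈ A' := fun i => (hvv.2 i).2.1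
        obtain ⟨i, j, h1, h2, h3, he⟩ := hch k hk vv ⟨hvv.1, fun i => (hvv.2 i).1⟩
        exact ⟨i, j, h1, h2, h3, he, hvA i, hvA j⟩
      have hE'sub : ∀ e ∈ E', e.1 ∈ A' ∧ e.2 ∈ A' := fun e he => he.2
      have hlift : ∀ z, z ∈ compS E B r → Simp E' z → Simp E z := by
        intro z hz hsimp c d hc hd hcd
        exact (hsimp c d ⟨hc, hCin z hz, hnb z c hz hc⟩
          ⟨hd, hCin z hz, hnb z d hz hd⟩ hcd).1
      rcases ih A' (by omega) E' hE'symm hE'irr hE'ch hE'sub with hclq' |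
        ⟨u₁, hu₁, u₂, hu₂, hne12, hnadj12, hs1, hs2⟩
      · refine ⟨r, ⟨hrB, Relation.ReflTransGen.refl⟩, ?_⟩
        intro c d hc hd hcd
        have hrC : r ∈ compS E B r := ⟨hrB, Relation.ReflTransGen.refl⟩
        exact (hclq' c (hnb r c hrC hc) d (hnb r d hrC hd) hcd).1
      · have hor : u₁ ∈ compS E B r ∨ u₂ ∈ compS E B r := by
          by_contra hcon
          push_neg at hcon
          have h1 : u₁ ∈ S := ((Finset.mem_filter.mp hu₁).2).resolve_right hcon.1
          have h2 : u₂ ∈ S := ((Finset.mem_filter.mp hu₂).2).resolve_right hcon.2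
          exact hnadj12 ⟨hSclq u₁ h1 u₂ h2 hne12, hu₁, hu₂⟩
        rcases hor with h | h
        · exact ⟨u₁, h, hlift u₁ h hs1⟩
        · exact ⟨u₂, h, hlift u₂ h hs2⟩
    have hbnc : b ∉ compS E B a := fun h => hSep h.2
    have hanc : a ∉ compS E B b := fun h => hSep (reach_symm hE h.2)
    obtain ⟨ua, huaC, huaS⟩ := hside a b haB hb hbnc hbS hnbra
    obtain ⟨ub, hubC, hubS⟩ := hside b a hbB ha hanc haS hnbrb
    refine ⟨ua, Finset.mem_coe.mp huaC.1.1, ub, Finset.mem_coe.mp hubC.1.1, ?_, ?_,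
      huaS, hubS⟩
    · exact fun h => hdisjab ua huaC (h ▸ hubC)
    · exact fun he => hdisjab ub (hclose a ua ub huaC hubC.1 he) hubC

/-- A nonempty chordal graph has a non-isolated simplicial vertex. -/
lemma exists_simplicial {E : Set (Fin n × Fin n)} (hE : SymmEdges E) (hirr : ∀ i, (i, i) ∉ E)
    (hch : IsChordal E) (hne : E.Nonempty) :
    ∃ v, (∃ w, (v, w) ∈ E) ∧ Simp E v := by
  classical
  obtain ⟨e0, he0⟩ := hne
  set U : Finset (Fin n) := Finset.univ.filter (fun v => ∃ w, (v, w) ∈ E) with hU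
  have hmemU : ∀ v w : Fin n, (v, w) ∈ E → v ∈ U := by
    intro v w hvw
    exact Finset.mem_filter.mpr ⟨Finset.mem_univ v, ⟨w, hvw⟩⟩
  have hsub : ∀ e ∈ E, e.1 ∈ U ∧ e.2 ∈ U := by
    intro e he
    exact ⟨hmemU e.1 e.2 he, hmemU e.2 e.1 (hE _ _ he)⟩
  rcases dirac_strong U.card U le_rfl E hE hirr hch hsub with hclq |
    ⟨u₁, hu1, _, _, _, _, hs1, _⟩
  · refine ⟨e0.1, ⟨e0.2, he0⟩, ?_⟩
    intro c d hc hd hcd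
    exact hclq c (hmemU c e0.1 (hE _ _ hc)) d (hmemU d e0.1 (hE _ _ hd)) hcd
  · obtain ⟨_, hw⟩ := Finset.mem_filter.mp hu1
    exact ⟨u₁, hw, hs1⟩

/-- Range of a real symmetric matrix contains every vector orthogonal to its kernel. -/
lemma exists_mulVec_eq {B : Matrix (Fin n) (Fin n) ℝ} (hB : B.IsSymm) (x : Fin n → ℝ)
    (hx : ∀ z, B *ᵥ z = 0 → x ⬝ᵥ z = 0) : ∃ c, B *ᵥ c = x := by
  classical
  set T : EuclideanSpace ℝ (Fin n) →ₗ[ℝ] EuclideanSpace ℝ (Fin n) :=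
    Matrix.toEuclideanLin B with hT
  set K := LinearMap.ker T with hK
  have hker : ∀ s : EuclideanSpace ℝ (Fin n), s ∈ K → B *ᵥ (WithLp.equiv 2 _ s) = 0 := by
    intro s hs
    have : T s = 0 := hs
    rw [Matrix.toEuclideanLin_apply] at this
    have := congrArg (WithLp.equiv 2 (Fin n → ℝ)) this
    simpa using this
  have hsymm : ∀ (v w : Fin n → ℝ), v ⬝ᵥ (B *ᵥ w) = (B *ᵥ v) ⬝ᵥ w := by
    intro v w
    rw [Matrix.dotProduct_mulVec, ← Matrix.mulVec_transpose, hB]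
  have hinner : ∀ (a b : EuclideanSpace ℝ (Fin n)),
      (inner ℝ a b : ℝ) = (WithLp.equiv 2 (Fin n → ℝ) a) ⬝ᵥ (WithLp.equiv 2 (Fin n → ℝ) b) := by
    intro a b
    rw [EuclideanSpace.inner_eq_star_dotProduct, dotProduct_comm]
    rfl
  have hrange : LinearMap.range T = Kᗮ := by
    apply Submodule.eq_of_le_of_finrank_eq
    · rintro _ ⟨u, rfl⟩
      rw [Submodule.mem_orthogonal]
      intro s hs
      rw [hinner, show WithLp.equiv 2 (Fin n → ℝ) (T u) = B *ᵥ WithLp.equiv 2 _ u from rfl,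
        hsymm _ _, dotProduct_comm]
      · rw [hker s hs]
        simp
    · have h1 := Submodule.finrank_add_finrank_orthogonal (𝕜 := ℝ) K
      have h2 := LinearMap.finrank_range_add_finrank_ker T
      rw [← hK] at h2
      omega
  have hxmem : ((WithLp.equiv 2 (Fin n → ℝ)).symm x) ∈ Kᗮ := by
    rw [Submodule.mem_orthogonal]
    intro s hs
    rw [hinner]
    have h0 := hx (WithLp.equiv 2 (Fin n → ℝ) s) (hker s hs)
    rw [dotProduct_comm] at h0
    simpa using h0
  rw [← hrange] at hxmem
  obtain ⟨c, hc⟩ := hxmem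
  refine ⟨WithLp.equiv 2 (Fin n → ℝ) c, ?_⟩
  have := congrArg (WithLp.equiv 2 (Fin n → ℝ)) hc
  rw [show WithLp.equiv 2 (Fin n → ℝ) (T c) = B *ᵥ WithLp.equiv 2 _ c from rfl] at this
  simpa using this

lemma quad_expand_s5 (M : Matrix (Fin n) (Fin n) ℝ) (y : Fin n → ℝ) :
    y ⬝ᵥ M *ᵥ y = ∑ a, ∑ b, y a * M a b * y b := by
  simp only [dotProduct, Matrix.mulVec, Finset.mul_sum, mul_assoc]

lemma quad_supported (M : Matrix (Fin n) (Fin n) ℝ) (y : Fin n → ℝ) (D : Finset (Fin n))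
    (hy : ∀ i, i ∉ D → y i = 0) :
    y ⬝ᵥ M *ᵥ y = ∑ a ∈ D, ∑ b ∈ D, y a * M a b * y b := by
  rw [quad_expand_s5]
  rw [← Finset.sum_subset (Finset.subset_univ D) (by
    intro a _ ha
    rw [hy a ha]
    simp)]
  refine Finset.sum_congr rfl ?_
  intro a _
  rw [← Finset.sum_subset (Finset.subset_univ D) (by
    intro b _ hb
    rw [hy b hb]
    simp)]

lemma quad_congr {M M' : Matrix (Fin n) (Fin n) ℝ} {y : Fin n → ℝ}
    (h : ∀ a b, y a ≠ 0 → y b ≠ 0 → M a b = M' a b) :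
    y ⬝ᵥ M *ᵥ y = y ⬝ᵥ M' *ᵥ y := by
  rw [quad_expand_s5, quad_expand_s5]
  refine Finset.sum_congr rfl fun a _ => Finset.sum_congr rfl fun b _ => ?_
  by_cases ha : y a = 0
  · simp [ha]
  · by_cases hb : y b = 0
    · simp [hb]
    · rw [h a b ha hb]

lemma symm_dot {M : Matrix (Fin n) (Fin n) ℝ} (hM : M.IsSymm) (v w : Fin n → ℝ) :
    (M *ᵥ v) ⬝ᵥ w = v ⬝ᵥ (M *ᵥ w) := by
  rw [Matrix.dotProduct_mulVec, ← Matrix.mulVec_transpose, hM]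

lemma psd_quad {M : Matrix (Fin n) (Fin n) ℝ} (hM : M.PosSemidef) (z : Fin n → ℝ) :
    0 ≤ z ⬝ᵥ M *ᵥ z := by
  have := hM.dotProduct_mulVec_nonneg z
  have hz : star z = z := funext fun i => star_trivial _
  rwa [hz] at this

lemma herm_of_isSymm {M : Matrix (Fin n) (Fin n) ℝ} (h : M.IsSymm) : M.IsHermitian := by
  ext i j
  show star (M j i) = M i j
  rw [star_trivial]
  exact h.apply i j

lemma poly_nonneg_linear_zero {A s : ℝ} (hA : 0 ≤ A)
    (h : ∀ t : ℝ, 0 ≤ 2 * t * s + t ^ 2 * A) : s = 0 := by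
  by_contra hs
  have ht := h (-(s / (A + 1)))
  have hA1 : 0 < A + 1 := by linarith
  have hs2 : 0 < s ^ 2 := by
    have := abs_pos.mpr hs
    nlinarith [sq_abs s]
  have e : 2 * (-(s / (A + 1))) * s + (-(s / (A + 1))) ^ 2 * A =
      -(s ^ 2) * (A + 2) / (A + 1) ^ 2 := by
    field_simp
    ring
  rw [e] at ht
  have hneg : -(s ^ 2) * (A + 2) / (A + 1) ^ 2 < 0 := by
    apply div_neg_of_neg_of_pos
    · nlinarith
    · positivity
  linarith

lemma single_quad (M : Matrix (Fin n) (Fin n) ℝ) (i : Fin n) :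
    (Pi.single i 1 : Fin n → ℝ) ⬝ᵥ M *ᵥ Pi.single i 1 = M i i := by
  rw [Matrix.mulVec_single_one, single_dotProduct]
  simp

lemma singleton_clique (E : Set (Fin n × Fin n)) (i : Fin n) : IsClique E {i} := by
  intro a ha b hb hab
  rw [Finset.mem_singleton] at ha hb
  exact absurd (ha.trans hb.symm) hab

/-- Grone's theorem: a chordal partial matrix whose clique submatrices are PSD admits a
PSD completion. -/
lemma grone : ∀ (N : ℕ) (E : Set (Fin n × Fin n)), E.ncard ≤ N →
    SymmEdges E → (∀ i, (i, i) ∉ E) → IsChordal E →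
    ∀ X : Matrix (Fin n) (Fin n) ℝ, X.IsSymm →
    (∀ i j, (i, j) ∉ EStar E → X i j = 0) →
    (∀ D : Finset (Fin n), IsClique E D → ∀ y : Fin n → ℝ,
      (∀ i, i ∉ D → y i = 0) → 0 ≤ y ⬝ᵥ X *ᵥ y) →
    ∃ M : Matrix (Fin n) (Fin n) ℝ, M.PosSemidef ∧ ∀ i j, (i, j) ∈ EStar E → M i j = X i j := by
  intro N
  induction N with
  | zero =>
    intro E hcard hE hirr hch X hXs hXsp hXq
    have hE0 : E = ∅ := (Set.ncard_eq_zero (Set.toFinite E)).mp (by omega)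
    subst hE0
    have hdiag : X = Matrix.diagonal (fun i => X i i) := by
      ext i j
      by_cases hij : i = j
      · subst hij; simp
      · rw [Matrix.diagonal_apply_ne _ hij]
        refine hXsp i j ?_
        rintro (h | h)
        · exact absurd h (Set.notMem_empty _)
        · exact hij h
    have hnn : ∀ i, 0 ≤ X i i := by
      intro i
      have h0 := hXq {i} (singleton_clique _ i) (Pi.single i 1) (by
        intro j hj
        rw [Finset.mem_singleton] at hj
        exact Pi.single_eq_of_ne hj 1)
      rwa [single_quad] at h0
    refine ⟨X, ?_, fun i j _ => rfl⟩
    rw [hdiag]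
    exact Matrix.posSemidef_diagonal_iff.mpr hnn
  | succ N ih =>
    intro E hcard hE hirr hch X hXs hXsp hXq
    classical
    by_cases hEe : E = ∅
    · exact ih E (by rw [hEe]; simp) hE hirr hch X hXs hXsp hXq
    obtain ⟨v, ⟨w0, hvw0⟩, hsimp⟩ :=
      exists_simplicial hE hirr hch (Set.nonempty_iff_ne_empty.mpr hEe)
    set Sf : Finset (Fin n) := Finset.univ.filter (fun w => (v, w) ∈ E) with hSfdef
    have hmemS : ∀ w, w ∈ Sf ↔ (v, w) ∈ E := by intro w; simp [hSfdef]
    have hvS : v ∉ Sf := fun h => hirr v ((hmemS v).mp h)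
    set E' : Set (Fin n × Fin n) := {q ∈ E | q.1 ≠ v ∧ q.2 ≠ v} with hE'def
    have hE'sub : ∀ q, q ∈ E' → q ∈ E := fun q hq => hq.1
    have hE'symm : SymmEdges E' := fun i j h => ⟨hE i j h.1, h.2.2, h.2.1⟩
    have hE'irr : ∀ i, (i, i) ∉ E' := fun i h => hirr i h.1
    have hE'ch : IsChordal E' := by
      intro k hk vv hvv
      obtain ⟨i, j, h1, h2, h3, he⟩ := hch k hk vv ⟨hvv.1, fun i => hE'sub _ (hvv.2 i)⟩
      exact ⟨i, j, h1, h2, h3, he, (hvv.2 i).2.1, (hvv.2 j).2.1⟩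
    have hcard' : E'.ncard ≤ N := by
      have hss : E' ⊂ E := by
        constructor
        · exact fun q hq => hq.1
        · intro hsub'
          exact (hsub' hvw0).2.1 rfl
      have := Set.ncard_lt_ncard hss (Set.toFinite E)
      omega
    set X' : Matrix (Fin n) (Fin n) ℝ :=
      Matrix.of (fun i j => if (i = v ∨ j = v) ∧ i ≠ j then 0 else X i j) with hX'def
    have hX'app : ∀ i j, X' i j = if (i = v ∨ j = v) ∧ i ≠ j then 0 else X i j :=
      fun i j => rfl
    have hX's : X'.IsSymm := by
      ext i j
      rw [Matrix.transpose_apply, hX'app, hX'app]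
      by_cases h : (i = v ∨ j = v) ∧ i ≠ j
      · rw [if_pos ⟨h.1.symm, h.2.symm⟩, if_pos h]
      · rw [if_neg (fun hc => h ⟨hc.1.symm, hc.2.symm⟩), if_neg h]
        exact hXs.apply i j
    have hX'sp : ∀ i j, (i, j) ∉ EStar E' → X' i j = 0 := by
      intro i j hij
      by_cases hd : i = j
      · exact absurd (Or.inr hd) hij
      · by_cases hv' : i = v ∨ j = v
        · rw [hX'app, if_pos ⟨hv', hd⟩]
        · push_neg at hv'
          rw [hX'app, if_neg (fun hc => hc.1.elim hv'.1 hv'.2)]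
          refine hXsp i j ?_
          rintro (h | h)
          · exact hij (Or.inl ⟨h, hv'.1, hv'.2⟩)
          · exact hd h
    have hX'q : ∀ D, IsClique E' D → ∀ y : Fin n → ℝ, (∀ i, i ∉ D → y i = 0) →
        0 ≤ y ⬝ᵥ X' *ᵥ y := by
      intro D hD y hy
      by_cases hvD : v ∈ D
      · have hD1 : ∀ z ∈ D, z = v := by
          intro z hz
          by_contra hzv
          exact ((hD v hvD z hz (fun h => hzv h.symm)).2.1) rfl
        have hyy : ∀ i, i ∉ ({v} : Finset (Fin n)) → y i = 0 := by
          intro i hiv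
          refine hy i (fun hmem => hiv ?_)
          rw [Finset.mem_singleton]
          exact hD1 i hmem
        have h1 : y ⬝ᵥ X' *ᵥ y = y ⬝ᵥ X *ᵥ y := by
          apply quad_congr
          intro a b ha hb
          have hav : a = v := by
            by_contra h
            exact ha (hyy a (by rw [Finset.mem_singleton]; exact h))
          have hbv : b = v := by
            by_contra h
            exact hb (hyy b (by rw [Finset.mem_singleton]; exact h))
          subst hav; subst hbv
          rw [hX'app, if_neg (fun hc => hc.2 rfl)]
        rw [h1]
        exact hXq {v} (singleton_clique _ v) y hyy
      · have h1 : y ⬝ᵥ X' *ᵥ y = y ⬝ᵥ X *ᵥ y := by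
          apply quad_congr
          intro a b ha hb
          have haD : a ∈ D := by by_contra h; exact ha (hy a h)
          have hbD : b ∈ D := by by_contra h; exact hb (hy b h)
          rw [hX'app]
          by_cases hab : a = b
          · rw [if_neg (fun hc => hc.2 hab)]
          · have hav : a ≠ v := fun h => hvD (h ▸ haD)
            have hbv : b ≠ v := fun h => hvD (h ▸ hbD)
            rw [if_neg (fun hc => hc.1.elim hav hbv)]
        rw [h1]
        exact hXq D (fun i hi j hj hij => (hD i hi j hj hij).1) y hy
    obtain ⟨M', hM'psd, hM'⟩ := ih E' hcard' hE'symm hE'irr hE'ch X' hX's hX'sp hX'q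
    have hM's : M'.IsSymm := by
      ext i j
      rw [Matrix.transpose_apply]
      calc M' j i = star (M' j i) := (star_trivial _).symm
        _ = M'ᴴ i j := rfl
        _ = M' i j := by rw [hM'psd.1]
    have hSclq : IsClique E Sf := fun i hi j hj hij =>
      hsimp i j ((hmemS i).mp hi) ((hmemS j).mp hj) hij
    have hClclq : IsClique E (insert v Sf) := by
      intro i hi j hj hij
      rcases Finset.mem_insert.mp hi with rfl | hi'
      · rcases Finset.mem_insert.mp hj with rfl | hj'
        · exact absurd rfl hij
        · exact (hmemS j).mp hj'
      · rcases Finset.mem_insert.mp hj with rfl | hj'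
        · exact hE _ _ ((hmemS i).mp hi')
        · exact hSclq i hi' j hj' hij
    set Bh : Matrix (Fin n) (Fin n) ℝ :=
      Matrix.of (fun a b => if a ∈ Sf ∧ b ∈ Sf then X a b else 0) with hBhdef
    have hBhapp : ∀ a b, Bh a b = if a ∈ Sf ∧ b ∈ Sf then X a b else 0 := fun a b => rfl
    have hBhs : Bh.IsSymm := by
      ext i j
      rw [Matrix.transpose_apply, hBhapp, hBhapp]
      by_cases h : i ∈ Sf ∧ j ∈ Sf
      · rw [if_pos ⟨h.2, h.1⟩, if_pos h]
        exact hXs.apply i j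
      · rw [if_neg (fun hc => h ⟨hc.2, hc.1⟩), if_neg h]
    set xv : Fin n → ℝ := fun w => if w ∈ Sf then X v w else 0 with hxvdef
    have hXvv : 0 ≤ X v v := by
      have h0 := hXq {v} (singleton_clique _ v) (Pi.single v 1) (by
        intro j hj
        rw [Finset.mem_singleton] at hj
        exact Pi.single_eq_of_ne hj 1)
      rwa [single_quad] at h0
    have hrestr : ∀ z : Fin n → ℝ, Bh *ᵥ (fun w => if w ∈ Sf then z w else 0) = Bh *ᵥ z := by
      intro z
      funext a
      simp only [Matrix.mulVec, dotProduct]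
      apply Finset.sum_congr rfl
      intro b _
      by_cases hb : b ∈ Sf
      · rw [if_pos hb]
      · rw [hBhapp, if_neg (fun hc => hb hc.2), zero_mul, zero_mul]
    have hsol : ∃ c, Bh *ᵥ c = xv := by
      apply exists_mulVec_eq hBhs
      intro z hz
      set z' : Fin n → ℝ := fun w => if w ∈ Sf then z w else 0 with hz'def
      have hz'supp : ∀ i, i ∉ Sf → z' i = 0 := fun i hi => if_neg hi
      have hBz' : Bh *ᵥ z' = 0 := by rw [hz'def, hrestr, hz]
      have hxz : xv ⬝ᵥ z = xv ⬝ᵥ z' := by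
        simp only [dotProduct]
        apply Finset.sum_congr rfl
        intro b _
        by_cases hb : b ∈ Sf
        · rw [hz'def]; simp only [if_pos hb]
        · rw [show xv b = 0 from if_neg hb, zero_mul, zero_mul]
      rw [hxz]
      refine poly_nonneg_linear_zero hXvv ?_
      intro t
      have hsupp : ∀ i, i ∉ insert v Sf →
          (z' + t • (Pi.single v 1 : Fin n → ℝ)) i = 0 := by
        intro i hi
        rw [Finset.mem_insert] at hi
        push_neg at hi
        simp [hz'supp i hi.2, Pi.single_eq_of_ne hi.1]
      have h0 := hXq (insert v Sf) hClclq _ hsupp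
      have hXz'v : z' ⬝ᵥ (X *ᵥ Pi.single v 1) = xv ⬝ᵥ z' := by
        rw [Matrix.mulVec_single_one]
        simp only [dotProduct, mul_one, Matrix.col_apply]
        apply Finset.sum_congr rfl
        intro a _
        by_cases ha : a ∈ Sf
        · rw [show X a v = X v a from hXs.apply v a,
            show xv a = X v a from if_pos ha, mul_comm]
        · rw [hz'supp a ha, zero_mul, show xv a = 0 from if_neg ha, zero_mul]
      have hvXz' : (Pi.single v 1 : Fin n → ℝ) ⬝ᵥ (X *ᵥ z') = xv ⬝ᵥ z' := by
        rw [single_dotProduct, one_mul]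
        simp only [Matrix.mulVec, dotProduct]
        apply Finset.sum_congr rfl
        intro b _
        by_cases hb : b ∈ Sf
        · rw [show xv b = X v b from if_pos hb]
        · rw [hz'supp b hb, mul_zero, show xv b = 0 from if_neg hb, zero_mul]
      have hz'Xz' : z' ⬝ᵥ (X *ᵥ z') = 0 := by
        have he : z' ⬝ᵥ (X *ᵥ z') = z' ⬝ᵥ (Bh *ᵥ z') := by
          apply quad_congr
          intro a b ha hb
          have haS : a ∈ Sf := by by_contra h; exact ha (hz'supp a h)
          have hbS : b ∈ Sf := by by_contra h; exact hb (hz'supp b h)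
          rw [hBhapp, if_pos ⟨haS, hbS⟩]
        rw [he, hBz', dotProduct_zero]
      have hexp : (z' + t • (Pi.single v 1 : Fin n → ℝ)) ⬝ᵥ
            X *ᵥ (z' + t • (Pi.single v 1 : Fin n → ℝ))
          = 2 * t * (xv ⬝ᵥ z') + t ^ 2 * X v v := by
        rw [Matrix.mulVec_add, Matrix.mulVec_smul, dotProduct_add, add_dotProduct,
          add_dotProduct, dotProduct_smul, dotProduct_smul, smul_dotProduct,
          smul_dotProduct, hz'Xz', hXz'v, hvXz', single_quad]
        simp only [smul_eq_mul]
        ring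
      rw [hexp] at h0
      exact h0
    obtain ⟨c0, hc0⟩ := hsol
    set ch : Fin n → ℝ := fun w => if w ∈ Sf then c0 w else 0 with hchdef
    have hch_supp : ∀ i, i ∉ Sf → ch i = 0 := fun i hi => if_neg hi
    have hBch : Bh *ᵥ ch = xv := by rw [hchdef, hrestr, hc0]
    set u : Fin n → ℝ := M' *ᵥ ch with hudef
    have hM'S : ∀ a b, a ∈ Sf → b ∈ Sf → M' a b = X a b := by
      intro a b ha hb
      by_cases hab : a = b
      · subst hab
        rw [hM' a a (Or.inr rfl), hX'app, if_neg (fun hc => hc.2 rfl)]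
      · have hav : a ≠ v := fun h => hvS (h ▸ ha)
        have hbv : b ≠ v := fun h => hvS (h ▸ hb)
        have hedge : (a, b) ∈ E := hSclq a ha b hb hab
        rw [hM' a b (Or.inl ⟨hedge, hav, hbv⟩), hX'app,
          if_neg (fun hc => hc.1.elim hav hbv)]
    have hu : ∀ w ∈ Sf, u w = xv w := by
      intro w hw
      rw [← hBch]
      show (M' *ᵥ ch) w = (Bh *ᵥ ch) w
      simp only [Matrix.mulVec, dotProduct]
      apply Finset.sum_congr rfl
      intro b _
      by_cases hb : b ∈ Sf
      · rw [hM'S w b hw hb, hBhapp, if_pos ⟨hw, hb⟩]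
      · rw [hch_supp b hb, mul_zero, mul_zero]
    have huX : ∀ w ∈ Sf, u w = X v w := fun w hw => (hu w hw).trans (if_pos hw)
    set q : ℝ := ch ⬝ᵥ xv with hqdef
    have hq1 : ch ⬝ᵥ u = q := by
      simp only [hqdef, dotProduct]
      apply Finset.sum_congr rfl
      intro w _
      by_cases hw : w ∈ Sf
      · rw [hu w hw]
      · rw [hch_supp w hw, zero_mul, zero_mul]
    have hq2 : ch ⬝ᵥ (X *ᵥ ch) = q := by
      have he : ch ⬝ᵥ (X *ᵥ ch) = ch ⬝ᵥ (Bh *ᵥ ch) := by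
        apply quad_congr
        intro a b ha hb
        have haS : a ∈ Sf := by by_contra h; exact ha (hch_supp a h)
        have hbS : b ∈ Sf := by by_contra h; exact hb (hch_supp b h)
        rw [hBhapp, if_pos ⟨haS, hbS⟩]
      rw [he, hBch]
    have hdq : q ≤ X v v := by
      set zz : Fin n → ℝ := ch - (Pi.single v 1 : Fin n → ℝ) with hzz
      have hzsupp : ∀ i, i ∉ insert v Sf → zz i = 0 := by
        intro i hi
        rw [Finset.mem_insert] at hi
        push_neg at hi
        simp [hzz, hch_supp i hi.2, Pi.single_eq_of_ne hi.1]
      have h0 := hXq (insert v Sf) hClclq zz hzsupp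
      have hcross1 : ch ⬝ᵥ (X *ᵥ Pi.single v 1) = q := by
        rw [Matrix.mulVec_single_one]
        simp only [hqdef, dotProduct, mul_one, Matrix.col_apply]
        apply Finset.sum_congr rfl
        intro a _
        by_cases ha : a ∈ Sf
        · rw [show X a v = X v a from hXs.apply v a, show xv a = X v a from if_pos ha]
        · rw [hch_supp a ha, zero_mul, zero_mul]
      have hcross2 : (Pi.single v 1 : Fin n → ℝ) ⬝ᵥ (X *ᵥ ch) = q := by
        rw [single_dotProduct, one_mul]
        simp only [hqdef, Matrix.mulVec, dotProduct]
        apply Finset.sum_congr rfl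
        intro b _
        by_cases hb : b ∈ Sf
        · rw [show xv b = X v b from if_pos hb, mul_comm]
        · rw [hch_supp b hb, mul_zero, show xv b = 0 from if_neg hb, zero_mul]
      have hexp : zz ⬝ᵥ (X *ᵥ zz) = q - 2 * q + X v v := by
        rw [hzz, Matrix.mulVec_sub, dotProduct_sub, sub_dotProduct, sub_dotProduct,
          hq2, hcross1, hcross2, single_quad]
        ring
      rw [hexp] at h0
      linarith
    set M : Matrix (Fin n) (Fin n) ℝ := Matrix.of (fun i j =>
      if i = v ∧ j = v then X v v else if i = v then u j else if j = v then u i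
      else M' i j) with hMdef
    have hMapp : ∀ i j, M i j = (if i = v ∧ j = v then X v v else if i = v then u j
      else if j = v then u i else M' i j) := fun i j => rfl
    have hagree : ∀ i j, (i, j) ∈ EStar E → M i j = X i j := by
      intro i j hij
      rcases hij with he | hd
      · by_cases hiv : i = v
        · have he' : (v, j) ∈ E := hiv ▸ he
          have hjv : j ≠ v := fun h => hirr v (h ▸ he')
          have hjS : j ∈ Sf := (hmemS j).mpr he'
          rw [hMapp, if_neg (fun hc => hjv hc.2), if_pos hiv, huX j hjS, hiv]
        · by_cases hjv : j = v
          · have he' : (v, i) ∈ E := hjv ▸ (hE _ _ he)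
            have hiS : i ∈ Sf := (hmemS i).mpr he'
            rw [hMapp, if_neg (fun hc => hiv hc.1), if_neg hiv, if_pos hjv,
              huX i hiS, hjv]
            exact hXs.apply i v
          · rw [hMapp, if_neg (fun hc => hiv hc.1), if_neg hiv, if_neg hjv]
            rw [hM' i j (Or.inl ⟨he, hiv, hjv⟩), hX'app,
              if_neg (fun hc => hc.1.elim hiv hjv)]
      · have hd' : i = j := hd
        subst hd'
        by_cases hiv : i = v
        · rw [hMapp, if_pos ⟨hiv, hiv⟩, hiv]
        · rw [hMapp, if_neg (fun hc => hiv hc.1), if_neg hiv, if_neg hiv]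
          rw [hM' i i (Or.inr rfl), hX'app, if_neg (fun hc => hc.2 rfl)]
    have hMs : M.IsSymm := by
      ext i j
      rw [Matrix.transpose_apply, hMapp, hMapp]
      by_cases hiv : i = v
      · by_cases hjv : j = v
        · rw [if_pos ⟨hjv, hiv⟩, if_pos ⟨hiv, hjv⟩]
        · rw [if_neg (fun hc => hjv hc.1), if_neg hjv, if_pos hiv,
            if_neg (fun hc => hjv hc.2), if_pos hiv]
      · by_cases hjv : j = v
        · rw [if_neg (fun hc => hiv hc.2), if_pos hjv, if_neg (fun hc => hiv hc.1),
            if_neg hiv, if_pos hjv]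
        · rw [if_neg (fun hc => hiv hc.2), if_neg hjv, if_neg hiv,
            if_neg (fun hc => hiv hc.1), if_neg hiv, if_neg hjv]
          exact hM's.apply i j
    have hMpsd : M.PosSemidef := by
      refine Matrix.posSemidef_iff_dotProduct_mulVec.mpr ⟨herm_of_isSymm hMs, ?_⟩
      intro y
      have hstar : star y = y := funext fun i => star_trivial _
      rw [hstar]
      set α : ℝ := y v with hα
      set y' : Fin n → ℝ := Function.update y v 0 with hy'def
      have hyv : y' v = 0 := Function.update_self v 0 y
      have hyw : ∀ w, w ≠ v → y' w = y w := fun w hw => Function.update_of_ne hw 0 y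
      have hdecomp : y = y' + α • (Pi.single v 1 : Fin n → ℝ) := by
        funext w
        by_cases hw : w = v
        · subst hw
          simp [hyv, Pi.single_eq_same, hα]
        · simp [hyw w hw, Pi.single_eq_of_ne hw]
      have hMe : (Pi.single v 1 : Fin n → ℝ) ⬝ᵥ (M *ᵥ Pi.single v 1) = X v v := by
        rw [single_quad, hMapp, if_pos ⟨rfl, rfl⟩]
      have hMey' : (Pi.single v 1 : Fin n → ℝ) ⬝ᵥ (M *ᵥ y') = u ⬝ᵥ y' := by
        rw [single_dotProduct, one_mul]
        simp only [Matrix.mulVec, dotProduct]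
        apply Finset.sum_congr rfl
        intro b _
        by_cases hb : b = v
        · subst hb
          rw [hyv, mul_zero, mul_zero]
        · rw [show M v b = u b by rw [hMapp, if_neg (fun hc => hb hc.2), if_pos rfl]]
      have hy'Me : y' ⬝ᵥ (M *ᵥ Pi.single v 1) = u ⬝ᵥ y' := by
        rw [Matrix.mulVec_single_one]
        simp only [dotProduct, mul_one, Matrix.col_apply]
        apply Finset.sum_congr rfl
        intro a _
        by_cases ha : a = v
        · subst ha
          rw [hyv, zero_mul, mul_zero]
        · rw [show M a v = u a by
            rw [hMapp, if_neg (fun hc => ha hc.1), if_neg ha, if_pos rfl], mul_comm]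
      have hy'My' : y' ⬝ᵥ (M *ᵥ y') = y' ⬝ᵥ (M' *ᵥ y') := by
        apply quad_congr
        intro a b ha hb
        have hav : a ≠ v := fun h => ha (h ▸ hyv)
        have hbv : b ≠ v := fun h => hb (h ▸ hyv)
        rw [hMapp, if_neg (fun hc => hav hc.1), if_neg hav, if_neg hbv]
      have huy' : u ⬝ᵥ y' = ch ⬝ᵥ (M' *ᵥ y') := by
        rw [hudef]
        exact symm_dot hM's ch y'
      have hexp : y ⬝ᵥ (M *ᵥ y) = y' ⬝ᵥ (M' *ᵥ y')
          + 2 * α * (ch ⬝ᵥ (M' *ᵥ y')) + α ^ 2 * X v v := by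
        conv_lhs => rw [hdecomp]
        rw [Matrix.mulVec_add, Matrix.mulVec_smul, dotProduct_add, add_dotProduct,
          add_dotProduct, dotProduct_smul, dotProduct_smul, smul_dotProduct,
          smul_dotProduct, hy'My', hMe, hMey', hy'Me, huy']
        simp only [smul_eq_mul]
        ring
      have hpsd' := psd_quad hM'psd (y' + α • ch)
      have hq3 : ch ⬝ᵥ (M' *ᵥ ch) = q := by rw [← hudef]; exact hq1
      have hchy' : y' ⬝ᵥ (M' *ᵥ ch) = ch ⬝ᵥ (M' *ᵥ y') := by
        rw [← symm_dot hM's y' ch, dotProduct_comm]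
      have hexp' : (y' + α • ch) ⬝ᵥ (M' *ᵥ (y' + α • ch)) = y' ⬝ᵥ (M' *ᵥ y')
          + 2 * α * (ch ⬝ᵥ (M' *ᵥ y')) + α ^ 2 * q := by
        rw [Matrix.mulVec_add, Matrix.mulVec_smul, dotProduct_add, add_dotProduct,
          add_dotProduct, dotProduct_smul, dotProduct_smul, smul_dotProduct,
          smul_dotProduct, hq3, hchy']
        simp only [smul_eq_mul]
        ring
      rw [hexp' ] at hpsd'
      rw [hexp]
      nlinarith [sq_nonneg α, hdq, hpsd']
    exact ⟨M, hMpsd, hagree⟩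

lemma quad_expand' {ι : Type*} [Fintype ι] (M : Matrix ι ι ℝ) (y : ι → ℝ) :
    y ⬝ᵥ M *ᵥ y = ∑ a, ∑ b, y a * M a b * y b := by
  simp only [dotProduct, Matrix.mulVec, Finset.mul_sum, mul_assoc]

lemma sum_selector {Ck : Finset (Fin n)} (f : Fin n → ℝ) :
    ∑ i : Fin Ck.card, f ((Ck.orderIsoOfFin rfl i : Fin n)) = ∑ a ∈ Ck, f a := by
  calc ∑ i : Fin Ck.card, f ((Ck.orderIsoOfFin rfl i : Fin n))
      = ∑ x : {x // x ∈ Ck}, f x :=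
        Fintype.sum_equiv (Ck.orderIsoOfFin rfl).toEquiv _ _ (fun i => rfl)
    _ = ∑ a ∈ Ck, f a := Finset.sum_coe_sort Ck f

lemma exists_maximal_supclique {E : Set (Fin n × Fin n)} {D : Finset (Fin n)}
    (hD : IsClique E D) : ∃ Dm, IsMaximalClique E Dm ∧ D ⊆ Dm := by
  classical
  set 𝒞 := Finset.univ.powerset.filter (fun D' => IsClique E D' ∧ D ⊆ D') with h𝒞
  have hne : 𝒞.Nonempty := ⟨D, Finset.mem_filter.mpr
    ⟨Finset.mem_powerset.mpr (Finset.subset_univ D), hD, Finset.Subset.refl D⟩⟩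
  obtain ⟨Dm, hmem, hmax⟩ := Finset.exists_max_image 𝒞 Finset.card hne
  obtain ⟨-, hclq, hsub⟩ := Finset.mem_filter.mp hmem
  refine ⟨Dm, ⟨hclq, ?_⟩, hsub⟩
  intro D' hD' hsubm
  have hmem' : D' ∈ 𝒞 := Finset.mem_filter.mpr
    ⟨Finset.mem_powerset.mpr (Finset.subset_univ D'), hD', hsub.trans hsubm⟩
  exact (Finset.eq_of_subset_of_card_le hsubm (hmax D' hmem')).symm

lemma selector_conj_entry {C : Finset (Fin n)} (M : Matrix (Fin n) (Fin n) ℝ)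
    (i j : Fin C.card) :
    (selector C * M * (selector C)ᵀ) i j = M (C.orderIsoOfFin rfl i) (C.orderIsoOfFin rfl j) := by
  classical
  simp only [Matrix.mul_apply, Matrix.transpose_apply, selector, Matrix.of_apply,
    ite_mul, mul_ite, one_mul, mul_one, zero_mul, mul_zero, Finset.sum_ite_eq,
    Finset.mem_univ, if_true]

/-- Main equivalence: feasibility in the completable problem equals feasibility in the
decomposed problem. -/
lemma completable_iff_cliquePSD {p : ℕ} {E : Set (Fin n × Fin n)} (hE : SymmEdges E)
    (hchordal : IsChordal E) (C : Fin p → Finset (Fin n))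
    (hmax : ∀ k : Fin p, IsMaximalClique E (C k))
    (hall : ∀ D : Finset (Fin n), IsMaximalClique E D → ∃ k : Fin p, C k = D)
    (X : Matrix (Fin n) (Fin n) ℝ) :
    PSDCompletable E X ↔ (SparseSym E X ∧
      ∀ k : Fin p, (selector (C k) * X * (selector (C k))ᵀ).PosSemidef) := by
  classical
  constructor
  · rintro ⟨hsp, M, hMpsd, hM⟩
    refine ⟨hsp, ?_⟩
    intro k
    have hsel : selector (C k) * X * (selector (C k))ᵀ
        = selector (C k) * M * (selector (C k))ᵀ := by
      ext i j
      rw [selector_conj_entry, selector_conj_entry]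
      set a : Fin n := ((C k).orderIsoOfFin rfl i : Fin n) with ha
      set b : Fin n := ((C k).orderIsoOfFin rfl j : Fin n) with hb
      have haC : a ∈ C k := ((C k).orderIsoOfFin rfl i).2
      have hbC : b ∈ C k := ((C k).orderIsoOfFin rfl j).2
      by_cases hab : a = b
      · exact (hM a b (Or.inr hab)).symm
      · exact (hM a b (Or.inl ((hmax k).1 a haC b hbC hab))).symm
    rw [hsel]
    have hct : (selector (C k))ᴴ = (selector (C k))ᵀ := by
      ext i j
      simp [Matrix.conjTranspose_apply]
    rw [← hct]
    exact hMpsd.mul_mul_conjTranspose_same (selector (C k))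
  · rintro ⟨hsp, hpsd⟩
    refine ⟨hsp, ?_⟩
    obtain ⟨hXs, hXsp⟩ := hsp
    set E0 : Set (Fin n × Fin n) := {q ∈ E | q.1 ≠ q.2} with hE0
    have hE0symm : SymmEdges E0 := fun i j h => ⟨hE i j h.1, fun hh => h.2 hh.symm⟩
    have hE0irr : ∀ i, (i, i) ∉ E0 := fun i h => h.2 rfl
    have hEstar : EStar E0 = EStar E := by
      ext q
      constructor
      · rintro (h | h)
        · exact Or.inl h.1
        · exact Or.inr h
      · rintro (h | h)
        · by_cases hq : q.1 = q.2
          · exact Or.inr hq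
          · exact Or.inl ⟨h, hq⟩
        · exact Or.inr h
    have hE0ch : IsChordal E0 := by
      intro k hk vv hvv
      obtain ⟨i, j, h1, h2, h3, he⟩ := hchordal k hk vv ⟨hvv.1, fun i => (hvv.2 i).1⟩
      exact ⟨i, j, h1, h2, h3, he, fun hd => h1 (hvv.1 hd)⟩
    have hXq : ∀ D, IsClique E0 D → ∀ y : Fin n → ℝ, (∀ i, i ∉ D → y i = 0) →
        0 ≤ y ⬝ᵥ X *ᵥ y := by
      intro D hD y hy
      have hDE : IsClique E D := fun i hi j hj hij => (hD i hi j hj hij).1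
      obtain ⟨Dm, hDm, hsubm⟩ := exists_maximal_supclique hDE
      obtain ⟨k, hk⟩ := hall Dm hDm
      have hsubk : D ⊆ C k := by rw [hk]; exact hsubm
      have hy' : ∀ i, i ∉ C k → y i = 0 := fun i hi => hy i (fun hmem => hi (hsubk hmem))
      set e : Fin (C k).card → Fin n := fun i => ((C k).orderIsoOfFin rfl i : Fin n)
        with hedef
      set w : Fin (C k).card → ℝ := fun i => y (e i) with hwdef
      have hquad : y ⬝ᵥ X *ᵥ y
          = w ⬝ᵥ ((selector (C k) * X * (selector (C k))ᵀ) *ᵥ w) := by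
        rw [quad_supported X y (C k) hy', quad_expand']
        simp only [selector_conj_entry]
        calc ∑ a ∈ C k, ∑ b ∈ C k, y a * X a b * y b
            = ∑ i : Fin (C k).card, ∑ b ∈ C k, y (e i) * X (e i) b * y b :=
              (sum_selector _).symm
          _ = ∑ i : Fin (C k).card, ∑ j : Fin (C k).card,
                y (e i) * X (e i) (e j) * y (e j) :=
              Finset.sum_congr rfl fun i _ => (sum_selector _).symm
          _ = ∑ i : Fin (C k).card, ∑ j : Fin (C k).card,
                w i * X (e i) (e j) * w j := rfl
      rw [hquad]
      exact psd_quad (hpsd k) w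
    obtain ⟨M, hMpsd, hM⟩ := grone E0.ncard E0 le_rfl hE0symm hE0irr hE0ch X hXs
      (fun i j h => hXsp i j (by rwa [hEstar] at h)) hXq
    exact ⟨M, hMpsd, fun i j h => hM i j (by rwa [← hEstar] at h)⟩

end Aux

/-- **Domain-space decomposition.** Let `G(V,E)` be a chordal graph with maximal cliques
`C_1, …, C_p`, and suppose `C ∈ S^n(E,0)` and `A_i ∈ S^n(E,0)`.  Then the optimal value of
`inf {⟨C,X⟩ : ⟨A_i,X⟩ = b_i, X ∈ S^n_+(E,?)}` equals the optimal value of the decomposed SDP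
`inf {⟨C,X⟩ : ⟨A_i,X⟩ = b_i, X_k = E_{C_k} X E_{C_k}ᵀ, X_k ⪰ 0}`, the latter infimum being
over `X ∈ S^n(E,0)` and `X_k ∈ S^{|C_k|}`. -/
theorem domain_space_decomposition {n m p : ℕ} (E : Set (Fin n × Fin n)) (hE : SymmEdges E)
    (hchordal : IsChordal E) (C : Fin p → Finset (Fin n))
    (hmax : ∀ k : Fin p, IsMaximalClique E (C k))
    (hall : ∀ D : Finset (Fin n), IsMaximalClique E D → ∃ k : Fin p, C k = D)
    (b : Fin m → ℝ) (Cmat : Matrix (Fin n) (Fin n) ℝ) (A : Fin m → Matrix (Fin n) (Fin n) ℝ)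
    (hCmat : SparseSym E Cmat) (hA : ∀ i : Fin m, SparseSym E (A i)) :
    sInf {v : EReal | ∃ X : Matrix (Fin n) (Fin n) ℝ, PSDCompletable E X ∧
        (∀ i : Fin m, (A i * X).trace = b i) ∧ v = ((Cmat * X).trace : EReal)} =
    sInf {v : EReal | ∃ (X : Matrix (Fin n) (Fin n) ℝ)
        (Xk : (k : Fin p) → Matrix (Fin (C k).card) (Fin (C k).card) ℝ),
        SparseSym E X ∧
        (∀ i : Fin m, (A i * X).trace = b i) ∧
        (∀ k : Fin p, Xk k = selector (C k) * X * (selector (C k))ᵀ) ∧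
        (∀ k : Fin p, (Xk k).PosSemidef) ∧
        v = ((Cmat * X).trace : EReal)} := by
  congr 1
  ext v
  constructor
  · rintro ⟨X, hX, htr, hv⟩
    exact ⟨X, fun k => selector (C k) * X * (selector (C k))ᵀ,
      ((completable_iff_cliquePSD hE hchordal C hmax hall X).1 hX).1, htr,
      fun k => rfl, ((completable_iff_cliquePSD hE hchordal C hmax hall X).1 hX).2, hv⟩
  · rintro ⟨X, Xk, hsp, htr, hXk, hpsd, hv⟩
    refine ⟨X, (completable_iff_cliquePSD hE hchordal C hmax hall X).2 ⟨hsp, ?_⟩, htr, hv⟩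
    intro k
    rw [← hXk k]
    exact hpsd k
end

section
/- Recovery of optimal solutions from the HSDE: suppose u = (x,s,y,t,τ) ∈ K and v = (h,z,r,w,κ) ∈ K* satisfy v = Q u and τ > 0. Then x̂ = x/τ is feasible for the decomposed primal problem min{c^T x : A x = b, H x ∈ S} (indeed A x̂ = b and s/τ = H x̂ ∈ S), the pair (ŷ, t̂) = (y/τ, t/τ) is feasible for the decomposed dual problem max{b^T y : A^T y + H^T t = c, t ∈ S} (indeed A^T ŷ + H^T t̂ = c and t̂ = z/τ ∈ S), and the duality gap vanishes: c^T x̂ = b^T ŷ. Consequently x̂ is optimal for the primal problem and ŷ is optimal for the dual problem. -/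
open Matrix BigOperators

/-- Index type for the stacked (vectorized) semidefinite variables: one `|C_k| × |C_k|`
block of coordinates for each clique `C_k`, so that its cardinality is `n_d = Σ_k |C_k|²`. -/
abbrev CliqueIdx {n p : ℕ} (C : Fin p → Finset (Fin n)) : Type :=
  Σ k : Fin p, Fin (C k).card × Fin (C k).card

/-- Membership in the product cone `S = S_1 × ⋯ × S_p` of vectorized PSD cones:
`s ∈ S` iff, for each clique `k`, the `|C_k| × |C_k|` matrix formed by the corresponding
block of coordinates of `s` is positive semidefinite. -/
def MemS {n p : ℕ} (C : Fin p → Finset (Fin n)) (s : CliqueIdx C → ℝ) : Prop :=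
  ∀ k : Fin p,
    Matrix.PosSemidef (Matrix.of fun i j : Fin (C k).card => s ⟨k, (i, j)⟩)

/-- Index type for the HSDE variables `u = (x, s, y, t, τ)` and `v = (h, z, r, w, κ)`. -/
abbrev HsdeIdx {n p : ℕ} (C : Fin p → Finset (Fin n)) (N m : ℕ) : Type :=
  Fin N ⊕ (CliqueIdx C ⊕ (Fin m ⊕ (CliqueIdx C ⊕ Unit)))

/-- Stacking of the five components into a single vector. -/
def stackVec {n p N m : ℕ} (C : Fin p → Finset (Fin n))
    (x : Fin N → ℝ) (s : CliqueIdx C → ℝ) (y : Fin m → ℝ) (t : CliqueIdx C → ℝ) (τ : ℝ) :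
    HsdeIdx C N m → ℝ :=
  Sum.elim x (Sum.elim s (Sum.elim y (Sum.elim t fun _ => τ)))

/-- The HSDE matrix
`Q = [[0, 0, −Aᵀ, −Hᵀ, c],[0, 0, 0, I, 0],[A, 0, 0, 0, −b],[H, −I, 0, 0, 0],[−cᵀ, 0, bᵀ, 0, 0]]`. -/
def hsdeQ {n p N m : ℕ} (C : Fin p → Finset (Fin n))
    (A : Matrix (Fin m) (Fin N) ℝ) (H : Matrix (CliqueIdx C) (Fin N) ℝ)
    (b : Fin m → ℝ) (c : Fin N → ℝ) :
    Matrix (HsdeIdx C N m) (HsdeIdx C N m) ℝ :=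
  fun i j =>
    match i, j with
    | Sum.inl i, Sum.inr (Sum.inr (Sum.inl j)) => -A j i
    | Sum.inl i, Sum.inr (Sum.inr (Sum.inr (Sum.inl j))) => -H j i
    | Sum.inl i, Sum.inr (Sum.inr (Sum.inr (Sum.inr _))) => c i
    | Sum.inr (Sum.inl i), Sum.inr (Sum.inr (Sum.inr (Sum.inl j))) =>
        if i = j then 1 else 0
    | Sum.inr (Sum.inr (Sum.inl i)), Sum.inl j => A i j
    | Sum.inr (Sum.inr (Sum.inl i)), Sum.inr (Sum.inr (Sum.inr (Sum.inr _))) => -b i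
    | Sum.inr (Sum.inr (Sum.inr (Sum.inl i))), Sum.inl j => H i j
    | Sum.inr (Sum.inr (Sum.inr (Sum.inl i))), Sum.inr (Sum.inl j) =>
        if i = j then -1 else 0
    | Sum.inr (Sum.inr (Sum.inr (Sum.inr _))), Sum.inl j => -c j
    | Sum.inr (Sum.inr (Sum.inr (Sum.inr _))), Sum.inr (Sum.inr (Sum.inl j)) => b j
    | _, _ => 0

lemma psd_inner_nonneg {d : ℕ} {M P : Matrix (Fin d) (Fin d) ℝ}
    (hM : M.PosSemidef) (hP : P.PosSemidef) : 0 ≤ ∑ i, ∑ j, M i j * P i j := by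
  obtain ⟨B, hB⟩ : ∃ B : Matrix (Fin d) (Fin d) ℝ, M = Bᴴ * B := by
    open scoped MatrixOrder in
    obtain ⟨B, hB⟩ := CStarAlgebra.nonneg_iff_eq_star_mul_self.mp hM.nonneg
    exact ⟨B, hB⟩
  obtain ⟨D, hD⟩ : ∃ D : Matrix (Fin d) (Fin d) ℝ, P = Dᴴ * D := by
    open scoped MatrixOrder in
    obtain ⟨D, hD⟩ := CStarAlgebra.nonneg_iff_eq_star_mul_self.mp hP.nonneg
    exact ⟨D, hD⟩
  have hPt : Pᵀ = P := by
    have := hP.1.eq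
    simpa [Matrix.conjTranspose_eq_transpose_of_trivial] using this
  have key : ∑ i, ∑ j, M i j * P i j = Matrix.trace ((B * Dᴴ)ᴴ * (B * Dᴴ)) := by
    calc ∑ i, ∑ j, M i j * P i j = Matrix.trace (M * Pᵀ) := by
          simp [Matrix.trace, Matrix.mul_apply, Matrix.diag]
      _ = Matrix.trace ((B * Dᴴ)ᴴ * (B * Dᴴ)) := by
          rw [hPt, hB, hD, Matrix.conjTranspose_mul, Matrix.conjTranspose_conjTranspose]
          rw [show Bᴴ * B * (Dᴴ * D) = (Bᴴ * (B * Dᴴ)) * D by noncomm_ring,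
            Matrix.trace_mul_comm]
          rw [show D * (Bᴴ * (B * Dᴴ)) = D * Bᴴ * (B * Dᴴ) by noncomm_ring]
  have key2 : Matrix.trace ((B * Dᴴ)ᴴ * (B * Dᴴ)) = ∑ j, ∑ i, ((B * Dᴴ) i j)^2 := by
    simp [Matrix.trace, Matrix.mul_apply, Matrix.diag, Matrix.conjTranspose_apply, sq, mul_comm]
  rw [key, key2]
  positivity

lemma memS_dot_nonneg {n p : ℕ} {C : Fin p → Finset (Fin n)} {a b : CliqueIdx C → ℝ}
    (ha : MemS C a) (hb : MemS C b) : 0 ≤ a ⬝ᵥ b := by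
  rw [dotProduct, ← Finset.univ_sigma_univ, Finset.sum_sigma]
  apply Finset.sum_nonneg
  intro k _
  have := psd_inner_nonneg (ha k) (hb k)
  simpa [Fintype.sum_prod_type] using this

lemma memS_smul {n p : ℕ} {C : Fin p → Finset (Fin n)} {a : CliqueIdx C → ℝ} {r : ℝ}
    (hr : 0 ≤ r) (ha : MemS C a) : MemS C (r • a) := by
  intro k
  have : (Matrix.of fun i j : Fin (C k).card => (r • a) ⟨k, (i, j)⟩)
      = r • (Matrix.of fun i j : Fin (C k).card => a ⟨k, (i, j)⟩) := by
    ext i j; simp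
  rw [this]
  constructor
  · have := (ha k).1
    unfold Matrix.IsHermitian at this ⊢
    rw [Matrix.conjTranspose_smul, this]
    simp
  · exact ((ha k).smul hr).2

set_option maxHeartbeats 2000000 in
/-- **Recovery of optimal solutions from the HSDE.** If `u = (x,s,y,t,τ) ∈ K` and
`v = (h,z,r,w,κ) ∈ K*` satisfy `v = Q u` and `τ > 0`, then `x̂ = x/τ` is feasible for the
decomposed primal `min {cᵀx : Ax = b, Hx ∈ S}`, `(ŷ, t̂) = (y/τ, t/τ)` is feasible for the
decomposed dual `max {bᵀy : Aᵀy + Hᵀt = c, t ∈ S}` (with `t̂ = z/τ ∈ S`), the duality gap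
vanishes (`cᵀx̂ = bᵀŷ`), and consequently `x̂` is primal optimal and `ŷ` is dual optimal. -/
theorem hsde_solution_recovery {n p N m : ℕ} (C : Fin p → Finset (Fin n))
    (A : Matrix (Fin m) (Fin N) ℝ) (H : Matrix (CliqueIdx C) (Fin N) ℝ)
    (b : Fin m → ℝ) (c : Fin N → ℝ)
    (x : Fin N → ℝ) (s : CliqueIdx C → ℝ) (y : Fin m → ℝ) (t : CliqueIdx C → ℝ) (τ : ℝ)
    (h : Fin N → ℝ) (z : CliqueIdx C → ℝ) (r : Fin m → ℝ) (w : CliqueIdx C → ℝ) (κ : ℝ)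
    (hs : MemS C s) (hτK : 0 ≤ τ)
    (hh : h = 0) (hz : MemS C z) (hr : r = 0) (hw : w = 0) (hκ : 0 ≤ κ)
    (heq : stackVec C h z r w κ = (hsdeQ C A H b c) *ᵥ stackVec C x s y t τ)
    (hτ : 0 < τ) :
    A *ᵥ (τ⁻¹ • x) = b ∧
    H *ᵥ (τ⁻¹ • x) = τ⁻¹ • s ∧ MemS C (H *ᵥ (τ⁻¹ • x)) ∧
    Aᵀ *ᵥ (τ⁻¹ • y) + Hᵀ *ᵥ (τ⁻¹ • t) = c ∧
    τ⁻¹ • t = τ⁻¹ • z ∧ MemS C (τ⁻¹ • t) ∧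
    c ⬝ᵥ (τ⁻¹ • x) = b ⬝ᵥ (τ⁻¹ • y) ∧
    (∀ x' : Fin N → ℝ, A *ᵥ x' = b → MemS C (H *ᵥ x') →
      c ⬝ᵥ (τ⁻¹ • x) ≤ c ⬝ᵥ x') ∧
    (∀ (y' : Fin m → ℝ) (t' : CliqueIdx C → ℝ),
      Aᵀ *ᵥ y' + Hᵀ *ᵥ t' = c → MemS C t' → b ⬝ᵥ y' ≤ b ⬝ᵥ (τ⁻¹ • y)) := by
  subst hh hr hw
  -- component equations
  have e1 : ∀ i : Fin N, (Aᵀ *ᵥ y) i + (Hᵀ *ᵥ t) i = τ * c i := by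
    intro i
    have h0 := congrFun heq (Sum.inl i)
    simp [stackVec, hsdeQ, Matrix.mulVec, dotProduct,
      Fintype.sum_sum_type] at h0 ⊢
    linarith
  have e2 : z = t := by
    funext i
    have := congrFun heq (Sum.inr (Sum.inl i))
    simpa [stackVec, hsdeQ, Matrix.mulVec, dotProduct, Fintype.sum_sum_type,
      ite_mul] using this
  have e3 : ∀ i : Fin m, (A *ᵥ x) i = τ * b i := by
    intro i
    have h0 := congrFun heq (Sum.inr (Sum.inr (Sum.inl i)))
    simp [stackVec, hsdeQ, Matrix.mulVec, dotProduct,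
      Fintype.sum_sum_type] at h0 ⊢
    linarith
  have e4 : ∀ i : CliqueIdx C, (H *ᵥ x) i = s i := by
    intro i
    have h0 := congrFun heq (Sum.inr (Sum.inr (Sum.inr (Sum.inl i))))
    simp [stackVec, hsdeQ, Matrix.mulVec, dotProduct, Fintype.sum_sum_type,
      ite_mul] at h0 ⊢
    linarith
  have e5 : κ = b ⬝ᵥ y - c ⬝ᵥ x := by
    have h0 := congrFun heq (Sum.inr (Sum.inr (Sum.inr (Sum.inr ()))))
    simp [stackVec, hsdeQ, Matrix.mulVec, dotProduct,
      Fintype.sum_sum_type] at h0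
    simp [dotProduct]
    linarith
  have hτ' : τ⁻¹ > 0 := inv_pos.mpr hτ
  -- primal feasibility
  have hP1 : A *ᵥ (τ⁻¹ • x) = b := by
    funext i
    rw [Matrix.mulVec_smul]
    simp [e3 i]
    field_simp
  have hHx : H *ᵥ (τ⁻¹ • x) = τ⁻¹ • s := by
    funext i
    rw [Matrix.mulVec_smul]
    simp [e4 i]
  have hPS : MemS C (H *ᵥ (τ⁻¹ • x)) := by
    rw [hHx]; exact memS_smul hτ'.le hs
  -- dual feasibility
  have hD1 : Aᵀ *ᵥ (τ⁻¹ • y) + Hᵀ *ᵥ (τ⁻¹ • t) = c := by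
    funext i
    rw [Matrix.mulVec_smul, Matrix.mulVec_smul]
    simp only [Pi.add_apply, Pi.smul_apply, smul_eq_mul]
    have := e1 i
    field_simp
    linarith
  have hDS : MemS C (τ⁻¹ • t) := e2 ▸ memS_smul hτ'.le hz
  -- weak duality
  have weak : ∀ (x' : Fin N → ℝ) (y' : Fin m → ℝ) (t' : CliqueIdx C → ℝ),
      A *ᵥ x' = b → MemS C (H *ᵥ x') → Aᵀ *ᵥ y' + Hᵀ *ᵥ t' = c → MemS C t' →
      b ⬝ᵥ y' ≤ c ⬝ᵥ x' := by
    intro x' y' t' hx1 hx2 hy1 hy2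
    have hc : c ⬝ᵥ x' = y' ⬝ᵥ (A *ᵥ x') + t' ⬝ᵥ (H *ᵥ x') := by
      rw [← hy1]
      rw [add_dotProduct, Matrix.mulVec_transpose, Matrix.mulVec_transpose,
        ← Matrix.dotProduct_mulVec, ← Matrix.dotProduct_mulVec]
    rw [hc, hx1]
    have := memS_dot_nonneg hy2 hx2
    have hcomm : b ⬝ᵥ y' = y' ⬝ᵥ b := dotProduct_comm _ _
    linarith
  have hge : b ⬝ᵥ (τ⁻¹ • y) ≤ c ⬝ᵥ (τ⁻¹ • x) := weak _ _ _ hP1 hPS hD1 hDS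
  have hle : c ⬝ᵥ (τ⁻¹ • x) ≤ b ⬝ᵥ (τ⁻¹ • y) := by
    rw [dotProduct_smul, dotProduct_smul]
    have : c ⬝ᵥ x ≤ b ⬝ᵥ y := by linarith [e5, hκ]
    simp only [smul_eq_mul]
    nlinarith [hτ'.le]
  have hgap : c ⬝ᵥ (τ⁻¹ • x) = b ⬝ᵥ (τ⁻¹ • y) := le_antisymm hle hge
  refine ⟨hP1, hHx, hPS, hD1, by rw [e2], hDS, hgap, ?_, ?_⟩
  · intro x' hx1 hx2
    have := weak x' (τ⁻¹ • y) (τ⁻¹ • t) hx1 hx2 hD1 hDS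
    linarith [hgap]
  · intro y' t' hy1 hy2
    have := weak (τ⁻¹ • x) y' t' hP1 hPS hy1 hy2
    linarith [hgap]
end

section
/- Certificate of primal infeasibility from the HSDE: suppose u = (x,s,y,t,τ) ∈ K and v = (h,z,r,w,κ) ∈ K* satisfy v = Q u, τ = 0, and b^T y > 0. Then the decomposed primal problem is infeasible: there exists no x̂ ∈ R^N with A x̂ = b and H x̂ ∈ S. (Indeed, τ = 0 forces A^T y + H^T t = 0 with t = z ∈ S, so for any feasible x̂ one would get b^T y = (A x̂)^T y = −⟨H x̂, t⟩ ≤ 0 by self-duality of S, a contradiction.) -/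
open Matrix BigOperators

lemma psd_entrywise_nonneg {ι : Type*} [Fintype ι] [DecidableEq ι] {M T : Matrix ι ι ℝ}
    (hM : M.PosSemidef) (hT : T.PosSemidef) :
    0 ≤ ∑ i, ∑ j, M i j * T i j := by
  obtain ⟨R, hR⟩ : ∃ R : Matrix ι ι ℝ, T = Rᴴ * R := by
    open scoped MatrixOrder in
    exact CStarAlgebra.nonneg_iff_eq_star_mul_self.mp hT.nonneg
  have hT' : ∀ i j, T i j = ∑ l, R l i * R l j := by
    intro i j; rw [hR]; simp [Matrix.mul_apply, Matrix.conjTranspose_apply]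
  have key : ∑ i, ∑ j, M i j * T i j = ∑ l, (fun i => R l i) ⬝ᵥ (M *ᵥ fun i => R l i) :=
    calc ∑ i, ∑ j, M i j * T i j
        = ∑ i, ∑ j, ∑ l, R l i * (M i j * R l j) := by
          simp only [hT', Finset.mul_sum]
          exact Finset.sum_congr rfl fun i _ => Finset.sum_congr rfl fun j _ =>
            Finset.sum_congr rfl fun l _ => by ring
      _ = ∑ i, ∑ l, ∑ j, R l i * (M i j * R l j) :=
          Finset.sum_congr rfl fun i _ => Finset.sum_comm
      _ = ∑ l, ∑ i, ∑ j, R l i * (M i j * R l j) := Finset.sum_comm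
      _ = ∑ l, (fun i => R l i) ⬝ᵥ (M *ᵥ fun i => R l i) := by
          simp [dotProduct, Matrix.mulVec, Finset.mul_sum]
  rw [key]
  exact Finset.sum_nonneg fun l _ => hM.re_dotProduct_nonneg _


/-- **Certificate of primal infeasibility from the HSDE.** If `u = (x,s,y,t,τ) ∈ K` and
`v = (h,z,r,w,κ) ∈ K*` satisfy `v = Q u`, `τ = 0` and `bᵀy > 0`, then the decomposed primal
problem is infeasible: there is no `x̂` with `A x̂ = b` and `H x̂ ∈ S`. -/
theorem hsde_primal_infeasibility {n p N m : ℕ} (C : Fin p → Finset (Fin n))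
    (A : Matrix (Fin m) (Fin N) ℝ) (H : Matrix (CliqueIdx C) (Fin N) ℝ)
    (b : Fin m → ℝ) (c : Fin N → ℝ)
    (x : Fin N → ℝ) (s : CliqueIdx C → ℝ) (y : Fin m → ℝ) (t : CliqueIdx C → ℝ) (τ : ℝ)
    (h : Fin N → ℝ) (z : CliqueIdx C → ℝ) (r : Fin m → ℝ) (w : CliqueIdx C → ℝ) (κ : ℝ)
    (hs : MemS C s) (hτK : 0 ≤ τ)
    (hh : h = 0) (hz : MemS C z) (hr : r = 0) (hw : w = 0) (hκ : 0 ≤ κ)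
    (heq : stackVec C h z r w κ = (hsdeQ C A H b c) *ᵥ stackVec C x s y t τ)
    (hτ : τ = 0) (hby : 0 < b ⬝ᵥ y) :
    ¬ ∃ x' : Fin N → ℝ, A *ᵥ x' = b ∧ MemS C (H *ᵥ x') := by
  rintro ⟨x', hAx', hHx'⟩
  have h2 : z = t := by
    funext k
    have hk := congrFun heq (Sum.inr (Sum.inl k))
    simpa [stackVec, hsdeQ, Matrix.mulVec, dotProduct,
      Fintype.sum_sum_type] using hk
  have ht : MemS C t := h2 ▸ hz
  have h1 : ∀ i : Fin N, (∑ j, A j i * y j) + (∑ k, H k i * t k) = 0 := by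
    intro i
    have hi := congrFun heq (Sum.inl i)
    simp only [stackVec, hsdeQ, Matrix.mulVec, dotProduct,
      Fintype.sum_sum_type, Sum.elim_inl, Sum.elim_inr, hh, hτ, Pi.zero_apply] at hi
    simp only [neg_mul, mul_zero, Finset.sum_const_zero, zero_mul,
      add_zero, zero_add] at hi
    have hi' : (∑ j, -(A j i * y j)) + (∑ k, -(H k i * t k)) = 0 := by linarith [hi]
    simp only [Finset.sum_neg_distrib] at hi'
    linarith [hi']
  have e1 : b ⬝ᵥ y = ∑ i, x' i * (∑ j, A j i * y j) := by
    rw [← hAx']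
    simp only [dotProduct, Matrix.mulVec, Finset.sum_mul, Finset.mul_sum]
    rw [Finset.sum_comm]
    exact Finset.sum_congr rfl fun i _ => Finset.sum_congr rfl fun j _ => by ring
  have e2 : (H *ᵥ x') ⬝ᵥ t = ∑ i, x' i * (∑ k, H k i * t k) := by
    simp only [dotProduct, Matrix.mulVec, Finset.sum_mul, Finset.mul_sum]
    rw [Finset.sum_comm]
    exact Finset.sum_congr rfl fun i _ => Finset.sum_congr rfl fun k _ => by ring
  have hb : b ⬝ᵥ y + (H *ᵥ x') ⬝ᵥ t = 0 := by
    rw [e1, e2, ← Finset.sum_add_distrib]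
    refine Finset.sum_eq_zero fun i _ => ?_
    rw [← mul_add, h1 i, mul_zero]
  have hnn : 0 ≤ (H *ᵥ x') ⬝ᵥ t := by
    have hsplit : (H *ᵥ x') ⬝ᵥ t
        = ∑ kk : Fin p, ∑ i : Fin (C kk).card, ∑ j : Fin (C kk).card,
            (H *ᵥ x') ⟨kk, (i, j)⟩ * t ⟨kk, (i, j)⟩ := by
      rw [dotProduct, ← Finset.univ_sigma_univ, Finset.sum_sigma]
      exact Finset.sum_congr rfl fun kk _ => by rw [Fintype.sum_prod_type]
    rw [hsplit]
    exact Finset.sum_nonneg fun kk _ => psd_entrywise_nonneg (hHx' kk) (ht kk)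
  linarith
end

section
/- Certificate of dual infeasibility from the HSDE: suppose u = (x,s,y,t,τ) ∈ K and v = (h,z,r,w,κ) ∈ K* satisfy v = Q u, τ = 0, and c^T x < 0. Then the decomposed dual problem is infeasible: there exist no ŷ ∈ R^m and t̂ ∈ R^{n_d} with A^T ŷ + H^T t̂ = c and t̂ ∈ S. (Indeed, τ = 0 forces A x = 0 and s = H x ∈ S, so for any dual feasible (ŷ, t̂) one would get c^T x = ŷ^T A x + ⟨t̂, H x⟩ = ⟨t̂, s⟩ ≥ 0 by self-duality of S, a contradiction.) -/
open Matrix BigOperators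

lemma trace_pair_nonneg {d : ℕ} {T S : Matrix (Fin d) (Fin d) ℝ}
    (hT : T.PosSemidef) (hS : S.PosSemidef) :
    0 ≤ ∑ i, ∑ j, T i j * S i j := by
  obtain ⟨B, rfl⟩ : ∃ B : Matrix (Fin d) (Fin d) ℝ, S = Bᴴ * B := by
    open scoped MatrixOrder Matrix.Norms.L2Operator in
    exact CStarAlgebra.nonneg_iff_eq_star_mul_self.mp hS.nonneg
  have key : (∑ i, ∑ j, T i j * (Bᴴ * B) i j) = ∑ l, (B l) ⬝ᵥ (T *ᵥ (B l)) := by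
    simp only [Matrix.mul_apply, Matrix.conjTranspose_apply, star_trivial,
      dotProduct, Matrix.mulVec, Finset.mul_sum]
    rw [show (∑ i, ∑ j, ∑ l, T i j * (B l i * B l j))
        = ∑ i, ∑ l, ∑ j, T i j * (B l i * B l j) from
      Finset.sum_congr rfl fun i _ => Finset.sum_comm, Finset.sum_comm]
    apply Finset.sum_congr rfl; intro l _
    apply Finset.sum_congr rfl; intro i _
    apply Finset.sum_congr rfl; intro j _
    ring
  rw [key]
  apply Finset.sum_nonneg
  intro l _
  simpa using hT.dotProduct_mulVec_nonneg (B l)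

/-- **Certificate of dual infeasibility from the HSDE.** If `u = (x,s,y,t,τ) ∈ K` and
`v = (h,z,r,w,κ) ∈ K*` satisfy `v = Q u`, `τ = 0` and `cᵀx < 0`, then the decomposed dual
problem is infeasible: there are no `ŷ, t̂` with `Aᵀ ŷ + Hᵀ t̂ = c` and `t̂ ∈ S`. -/
theorem hsde_dual_infeasibility {n p N m : ℕ} (C : Fin p → Finset (Fin n))
    (A : Matrix (Fin m) (Fin N) ℝ) (H : Matrix (CliqueIdx C) (Fin N) ℝ)
    (b : Fin m → ℝ) (c : Fin N → ℝ)
    (x : Fin N → ℝ) (s : CliqueIdx C → ℝ) (y : Fin m → ℝ) (t : CliqueIdx C → ℝ) (τ : ℝ)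
    (h : Fin N → ℝ) (z : CliqueIdx C → ℝ) (r : Fin m → ℝ) (w : CliqueIdx C → ℝ) (κ : ℝ)
    (hs : MemS C s) (hτK : 0 ≤ τ)
    (hh : h = 0) (hz : MemS C z) (hr : r = 0) (hw : w = 0) (hκ : 0 ≤ κ)
    (heq : stackVec C h z r w κ = (hsdeQ C A H b c) *ᵥ stackVec C x s y t τ)
    (hτ : τ = 0) (hcx : c ⬝ᵥ x < 0) :
    ¬ ∃ (y' : Fin m → ℝ) (t' : CliqueIdx C → ℝ),
        Aᵀ *ᵥ y' + Hᵀ *ᵥ t' = c ∧ MemS C t' := by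
  subst hh hr hw hτ
  -- A x = 0
  have hAx : A *ᵥ x = 0 := by
    funext i
    have := congrFun heq (Sum.inr (Sum.inr (Sum.inl i)))
    simp [stackVec, hsdeQ, mulVec, dotProduct, Fintype.sum_sum_type] at this
    simpa [mulVec, dotProduct] using this.symm
  -- H x = s
  have hHx : H *ᵥ x = s := by
    funext i
    have := congrFun heq (Sum.inr (Sum.inr (Sum.inr (Sum.inl i))))
    simp [stackVec, hsdeQ, mulVec, dotProduct, Fintype.sum_sum_type] at this
    simp only [mulVec, dotProduct]
    linarith [this]
  rintro ⟨y', t', hfeas, ht'⟩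
  have hcx' : c ⬝ᵥ x = t' ⬝ᵥ s := by
    calc c ⬝ᵥ x = (Aᵀ *ᵥ y' + Hᵀ *ᵥ t') ⬝ᵥ x := by rw [hfeas]
      _ = y' ⬝ᵥ (A *ᵥ x) + t' ⬝ᵥ (H *ᵥ x) := by
          rw [add_dotProduct, dotProduct_comm (Aᵀ *ᵥ y'),
            dotProduct_comm (Hᵀ *ᵥ t'), Matrix.dotProduct_mulVec,
            Matrix.dotProduct_mulVec, Matrix.vecMul_transpose, Matrix.vecMul_transpose,
            dotProduct_comm _ y', dotProduct_comm _ t']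
      _ = t' ⬝ᵥ s := by rw [hAx, hHx, dotProduct_zero, zero_add]
  have hnn : 0 ≤ t' ⬝ᵥ s := by
    rw [dotProduct, ← Finset.univ_sigma_univ, Finset.sum_sigma]
    apply Finset.sum_nonneg
    intro k _
    rw [Fintype.sum_prod_type]
    exact trace_pair_nonneg (ht' k) (hs k)
  linarith [hcx' ▸ hcx]
end
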